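/- arXiv:1512.03723 — 9 statements merged into one kernel-verified Lean document; each statement's English description precedes it below -/
import Mathlib

section
/- Clockwise travelling waves: if S is a clockwise wave state of the balanced candy sharing game with n children, then (f S) i = S (i − 1) for every i ∈ ZMod n; in particular f^[n] S = S, so S is periodic. -/
/-- The sharing map of the candy sharing game: each child with at least 2 candies
passes one candy to each neighbour. -/
def shareMap (n : ℕ) (S : ZMod n → ℕ) : ZMod n → ℕ := fun i =>
  (if 2 ≤ S i then S i - 2 else S i)
    + (if 2 ≤ S (i - 1) then 1 else 0)
    + (if 2 ≤ S (i + 1) then 1 else 0)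

/-- A state is periodic if some positive iterate of the sharing map fixes it. -/
def IsPeriodicState (n : ℕ) (S : ZMod n → ℕ) : Prop :=
  ∃ k : ℕ, 1 ≤ k ∧ (shareMap n)^[k] S = S

/-- A state is balanced if the total number of candies equals the number of children. -/
def IsBalanced (n : ℕ) [NeZero n] (S : ZMod n → ℕ) : Prop :=
  ∑ i : ZMod n, S i = n

/-- A clockwise wave state: starting from some position, the circular list of values
is a concatenation of blocks, each equal to [0,2] or [1]. -/
def IsClockwiseWave (n : ℕ) (S : ZMod n → ℕ) : Prop :=
  ∃ (a : ZMod n) (L : List (List ℕ)),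
    (∀ b ∈ L, b = [0, 2] ∨ b = [1]) ∧
    L.flatten = (List.range n).map fun j => S (a + (j : ZMod n))

/-- An anticlockwise wave state: starting from some position, the circular list of values
is a concatenation of blocks, each equal to [2,0] or [1]. -/
def IsAnticlockwiseWave (n : ℕ) (S : ZMod n → ℕ) : Prop :=
  ∃ (a : ZMod n) (L : List (List ℕ)),
    (∀ b ∈ L, b = [2, 0] ∨ b = [1]) ∧
    L.flatten = (List.range n).map fun j => S (a + (j : ZMod n))

/-- The state obtained when child `j` alone shares (assuming `2 ≤ S j`). -/
def shareAt (n : ℕ) (j : ZMod n) (S : ZMod n → ℕ) : ZMod n → ℕ := fun i =>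
  if i = j then S j - 2
  else if i = j - 1 then S (j - 1) + 1
  else if i = j + 1 then S (j + 1) + 1
  else S i

/-- The index of a state: the sum over all arcs (of length 1 to n) of their
deficiencies, where the deficiency of an arc of length k is max(0, k - (sum of the arc)). -/
def stateIndex (n : ℕ) [NeZero n] (S : ZMod n → ℕ) : ℕ :=
  ∑ i : ZMod n, ∑ k ∈ Finset.Icc 1 n, (k - ∑ j ∈ Finset.range k, S (i + (j : ZMod n)))

/-- The invariant τ of a state. -/
def tauInv (n : ℕ) [NeZero n] (S : ZMod n → ℕ) : ZMod n :=
  (if Even n then ((n / 2 : ℕ) : ZMod n) else 0)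
    + ∑ i : ZMod n, (i.val : ZMod n) * (S i : ZMod n)

lemma wave_flat (L : List (List ℕ)) (hL : ∀ b ∈ L, b = [0, 2] ∨ b = [1]) :
    ∀ k < L.flatten.length,
      L.flatten.getD k 1 ≤ 2 ∧
      (L.flatten.getD k 1 = 0 → k + 1 < L.flatten.length ∧ L.flatten.getD (k+1) 1 = 2) ∧
      (L.flatten.getD k 1 = 2 → ∃ k', k = k' + 1 ∧ L.flatten.getD k' 1 = 0) := by
  induction L with
  | nil => intro k hk; simp at hk
  | cons b L ih =>
    have hb := hL b (by simp)
    have hL' : ∀ b ∈ L, b = [0,2] ∨ b = [1] := fun b hb => hL b (by simp [hb])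
    have IH := ih hL'
    rcases hb with rfl | rfl
    · intro k hk
      simp only [List.flatten_cons, List.cons_append, List.nil_append] at *
      match k with
      | 0 => simp
      | 1 =>
        refine ⟨by simp, by simp, ?_⟩
        intro _
        exact ⟨0, rfl, by simp⟩
      | (k+2) =>
        simp only [List.getD_cons_succ, List.length_cons] at *
        have hk' : k < L.flatten.length := by omega
        obtain ⟨h1, h2, h3⟩ := IH k hk'
        refine ⟨h1, fun h => ⟨by have := (h2 h).1; omega, (h2 h).2⟩, fun h => ?_⟩
        obtain ⟨k', hk', h0⟩ := h3 h
        refine ⟨k' + 2, by omega, ?_⟩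
        simpa using h0
    · intro k hk
      simp only [List.flatten_cons, List.cons_append, List.nil_append] at *
      match k with
      | 0 => simp
      | (k+1) =>
        simp only [List.getD_cons_succ, List.length_cons] at *
        have hk' : k < L.flatten.length := by omega
        obtain ⟨h1, h2, h3⟩ := IH k hk'
        refine ⟨h1, fun h => ⟨by have := (h2 h).1; omega, (h2 h).2⟩, fun h => ?_⟩
        obtain ⟨k', hk', h0⟩ := h3 h
        refine ⟨k' + 1, by omega, ?_⟩
        simpa using h0

lemma wave_norm (n : ℕ) (g : ZMod n → ℕ) :
    ((List.range n).map fun j => g (j : ZMod n)) =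
      (List.range n).map (fun j : ℕ => g (j : ZMod n)) := by
  simp only [bind_pure_comp, List.map_eq_map, List.map_map]
  rfl

lemma wave_step (n : ℕ) (hn : 3 ≤ n) (S : ZMod n → ℕ) (hw : IsClockwiseWave n S) :
    ∀ i : ZMod n, shareMap n S i = S (i - 1) := by
  haveI : NeZero n := ⟨by omega⟩
  obtain ⟨a, L, hL, hflat⟩ := hw
  rw [wave_norm] at hflat
  have hlen : L.flatten.length = n := by
    rw [hflat, List.length_map, List.length_range]
  have hget : ∀ j < n, L.flatten.getD j 1 = S (a + (j : ZMod n)) := by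
    intro j hj
    have hj' : j < ((List.range n).map (fun j : ℕ => S (a + (j : ZMod n)))).length := by
      rw [List.length_map, List.length_range]; exact hj
    rw [hflat, List.getD_eq_getElem _ _ hj', List.getElem_map, List.getElem_range]
  have key := wave_flat L hL
  have h0 : ∀ i : ZMod n, S i ≤ 2 := by
    intro i
    have hj : (i - a).val < n := ZMod.val_lt _
    have e : a + (((i - a).val : ℕ) : ZMod n) = i := by
      simp [ZMod.natCast_val, ZMod.cast_id]
    have := (key (i - a).val (by omega)).1
    rwa [hget _ hj, e] at this
  have h1 : ∀ i : ZMod n, S i = 0 → S (i + 1) = 2 := by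
    intro i hi
    have hj : (i - a).val < n := ZMod.val_lt _
    have e : a + (((i - a).val : ℕ) : ZMod n) = i := by
      simp [ZMod.natCast_val, ZMod.cast_id]
    have h := (key (i - a).val (by omega)).2.1 (by rw [hget _ hj, e, hi])
    have hj1 : (i - a).val + 1 < n := by omega
    have h' := h.2
    rw [hget _ hj1] at h'
    rw [← h']
    congr 1
    rw [Nat.cast_add, Nat.cast_one, ← add_assoc, e]
  have h2 : ∀ i : ZMod n, S i = 2 → S (i - 1) = 0 := by
    intro i hi
    have hj : (i - a).val < n := ZMod.val_lt _
    have e : a + (((i - a).val : ℕ) : ZMod n) = i := by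
      simp [ZMod.natCast_val, ZMod.cast_id]
    obtain ⟨k', hk', h0'⟩ := (key (i - a).val (by omega)).2.2 (by rw [hget _ hj, e, hi])
    have hk'n : k' < n := by omega
    rw [hget _ hk'n] at h0'
    rw [← h0']
    congr 1
    have ecast : (((i - a).val : ℕ) : ZMod n) = (k' : ZMod n) + 1 := by
      rw [hk']; push_cast; ring
    rw [ecast] at e
    rw [← e]; ring
  intro i
  have hx := h0 i
  have hy := h0 (i - 1)
  have hz := h0 (i + 1)
  have e1 : S (i - 1) = 0 → S i = 2 := by
    intro h
    have := h1 (i - 1) h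
    simpa using this
  have e2 : S i = 2 → S (i - 1) = 0 := h2 i
  have e3 : S i = 0 → S (i + 1) = 2 := h1 i
  have e4 : S (i + 1) = 2 → S i = 0 := by
    intro h
    have := h2 (i + 1) h
    simpa using this
  rcases (by omega : S i = 0 ∨ S i = 1 ∨ S i = 2) with hxv | hxv | hxv
  · have hzv := e3 hxv
    have hyv : S (i - 1) ≠ 0 := fun h => by rw [e1 h] at hxv; omega
    simp only [shareMap]
    split_ifs <;> omega
  · have hzv : S (i + 1) ≠ 2 := fun h => by rw [e4 h] at hxv; omega
    have hyv : S (i - 1) ≠ 0 := fun h => by rw [e1 h] at hxv; omega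
    simp only [shareMap]
    split_ifs <;> omega
  · have hyv := e2 hxv
    have hzv : S (i + 1) ≠ 2 := fun h => by rw [e4 h] at hxv; omega
    simp only [shareMap]
    split_ifs <;> omega

lemma wave_rot (n : ℕ) (S : ZMod n → ℕ) (hw : IsClockwiseWave n S) :
    IsClockwiseWave n (fun i => S (i - 1)) := by
  obtain ⟨a, L, hL, hflat⟩ := hw
  refine ⟨a + 1, L, hL, ?_⟩
  rw [wave_norm] at hflat
  beta_reduce
  rw [wave_norm, hflat]
  apply List.map_congr_left
  intro j _
  congr 1
  ring

/-- Clockwise wave states travel clockwise: the next state is the rotation by one,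
and in particular the state is periodic of period dividing n. -/
theorem clockwise_wave_travels (n : ℕ) (hn : 3 ≤ n) (S : ZMod n → ℕ)
    (hw : IsClockwiseWave n S) :
    (∀ i : ZMod n, shareMap n S i = S (i - 1)) ∧ (shareMap n)^[n] S = S ∧
      IsPeriodicState n S := by
  haveI : NeZero n := ⟨by omega⟩
  have iter : ∀ k : ℕ, IsClockwiseWave n ((shareMap n)^[k] S) ∧
      (shareMap n)^[k] S = fun i => S (i - (k : ZMod n)) := by
    intro k
    induction k with
    | zero => exact ⟨hw, by funext i; simp⟩
    | succ k ih =>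
      obtain ⟨ihw, ihe⟩ := ih
      have step : (shareMap n)^[k+1] S = fun i => (shareMap n)^[k] S (i - 1) := by
        rw [Function.iterate_succ_apply']
        funext i
        exact wave_step n hn _ ihw i
      constructor
      · rw [step]; exact wave_rot n _ ihw
      · rw [step, ihe]
        funext i
        push_cast
        ring_nf
  have hfix : (shareMap n)^[n] S = S := by
    rw [(iter n).2]
    funext i
    simp
  exact ⟨fun i => wave_step n hn S hw i, hfix, ⟨n, by omega, hfix⟩⟩
end

section
/- Anticlockwise travelling waves: if S is an anticlockwise wave state of the balanced candy sharing game with n children, then (f S) i = S (i + 1) for every i ∈ ZMod n; in particular f^[n] S = S, so S is periodic. -/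
lemma waveList (L : List (List ℕ)) (hL : ∀ b ∈ L, b = [2,0] ∨ b = [1]) :
    (∀ x ∈ L.flatten, x ≤ 2) ∧
    (∀ k : ℕ, L.flatten[k]? = some 2 → L.flatten[k+1]? = some 0) ∧
    (∀ k : ℕ, L.flatten[k+1]? = some 0 → L.flatten[k]? = some 2) ∧
    L.flatten[0]? ≠ some 0 := by
  induction L with
  | nil => simp
  | cons b L ih =>
    obtain ⟨ih1, ih2, ih3, ih4⟩ := ih (fun b hb => hL b (List.mem_cons_of_mem _ hb))
    rcases hL b List.mem_cons_self with rfl | rfl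
    · simp only [List.flatten_cons, List.cons_append, List.nil_append]
      refine ⟨?_, ?_, ?_, ?_⟩
      · intro x hx
        simp only [List.mem_cons] at hx
        rcases hx with rfl | rfl | hx
        · omega
        · omega
        · exact ih1 x hx
      · intro k hk
        match k with
        | 0 => simp
        | 1 => simp at hk
        | (m+2) =>
          simp only [List.getElem?_cons_succ] at hk ⊢
          exact ih2 m hk
      · intro k hk
        match k with
        | 0 => simp
        | 1 =>
          simp only [List.getElem?_cons_succ] at hk
          exact absurd hk ih4
        | (m+2) =>
          simp only [List.getElem?_cons_succ] at hk ⊢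
          exact ih3 m hk
      · simp
    · simp only [List.flatten_cons, List.cons_append, List.nil_append]
      refine ⟨?_, ?_, ?_, ?_⟩
      · intro x hx
        simp only [List.mem_cons] at hx
        rcases hx with rfl | hx
        · omega
        · exact ih1 x hx
      · intro k hk
        match k with
        | 0 => simp at hk
        | (m+1) =>
          simp only [List.getElem?_cons_succ] at hk ⊢
          exact ih2 m hk
      · intro k hk
        match k with
        | 0 =>
          simp only [List.getElem?_cons_succ] at hk
          exact absurd hk ih4
        | (m+1) =>
          simp only [List.getElem?_cons_succ] at hk ⊢
          exact ih3 m hk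
      · simp

lemma shareMap_shift (n : ℕ) (c : ZMod n) (S : ZMod n → ℕ) :
    shareMap n (fun i => S (i + c)) = fun i => shareMap n S (i + c) := by
  funext i
  simp only [shareMap, sub_add_eq_add_sub, add_right_comm]

/-- Anticlockwise wave states travel anticlockwise: the next state is the rotation
by minus one, and in particular the state is periodic of period dividing n. -/
theorem anticlockwise_wave_travels (n : ℕ) (hn : 3 ≤ n) (S : ZMod n → ℕ)
    (hw : IsAnticlockwiseWave n S) :
    (∀ i : ZMod n, shareMap n S i = S (i + 1)) ∧ (shareMap n)^[n] S = S ∧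
      IsPeriodicState n S := by
  haveI : NeZero n := ⟨by omega⟩
  obtain ⟨a, L, hL, hflat⟩ := hw
  obtain ⟨W1, W2, W3, W4⟩ := waveList L hL
  have hinner : ((List.range n).flatMap fun a => [((a:ℕ) : ZMod n)])
      = (List.range n).map (fun a : ℕ => (a : ZMod n)) := by
    induction (List.range n) with
    | nil => rfl
    | cons x l ih => simp [List.flatMap_cons, ih]
  have hflat2 : L.flatten = (List.range n).map (fun j : ℕ => S (a + (j : ZMod n))) := by
    rw [hflat]
    simp only [List.pure_def, List.bind_eq_flatMap, hinner, List.map_map]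
    rfl
  have hT : ∀ k : ℕ, k < n → L.flatten[k]? = some (S (a + (k : ZMod n))) := by
    intro k hk
    rw [hflat2, List.getElem?_map, List.getElem?_range hk]
    rfl
  have hlen : L.flatten.length = n := by rw [hflat2]; simp
  have hTn : ∀ k : ℕ, n ≤ k → L.flatten[k]? = none := by
    intro k hk
    rw [List.getElem?_eq_none]
    omega
  have hval : ∀ j : ZMod n, a + (((j - a).val : ℕ) : ZMod n) = j := by
    intro j
    rw [ZMod.natCast_val, ZMod.cast_id]
    ring
  have hS2 : ∀ j : ZMod n, S j ≤ 2 := by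
    intro j
    have hmem : S j ∈ L.flatten := by
      have h := hT (j - a).val (ZMod.val_lt _)
      rw [hval j] at h
      obtain ⟨hk, he⟩ := List.getElem?_eq_some_iff.mp h
      exact he ▸ List.getElem_mem hk
    exact W1 _ hmem
  have hP2 : ∀ j : ZMod n, S j = 2 → S (j + 1) = 0 := by
    intro j hj
    have hkn : (j - a).val < n := ZMod.val_lt _
    have h1 : L.flatten[(j - a).val]? = some 2 := by
      rw [hT _ hkn, hval j, hj]
    have h2 := W2 _ h1
    have hk1 : (j - a).val + 1 < n := by
      by_contra h
      rw [hTn _ (by omega)] at h2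
      cases h2
    rw [hT _ hk1] at h2
    have heq : a + (((j - a).val + 1 : ℕ) : ZMod n) = j + 1 := by
      push_cast
      rw [← add_assoc, hval j]
    rw [heq] at h2
    exact Option.some.inj h2
  have hP0 : ∀ j : ZMod n, S j = 0 → S (j - 1) = 2 := by
    intro j hj
    have hkn : (j - a).val < n := ZMod.val_lt _
    have h1 : L.flatten[(j - a).val]? = some 0 := by
      rw [hT _ hkn, hval j, hj]
    cases h : (j - a).val with
    | zero => rw [h] at h1; exact absurd h1 W4
    | succ m =>
      rw [h] at h1 hkn
      have h2 := W3 m h1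
      rw [hT m (by omega)] at h2
      have heq : a + ((m : ℕ) : ZMod n) = j - 1 := by
        have h3 : a + ((m + 1 : ℕ) : ZMod n) = j := by rw [← h, hval j]
        push_cast at h3 ⊢
        linear_combination h3
      rw [heq] at h2
      exact Option.some.inj h2
  have part1 : ∀ i : ZMod n, shareMap n S i = S (i + 1) := by
    intro i
    have A := hS2 i
    have B := hS2 (i + 1)
    have C := hS2 (i - 1)
    have D := hP2 i
    have E := hP2 (i - 1)
    rw [sub_add_cancel] at E
    have F := hP0 (i + 1)
    rw [add_sub_cancel_right] at F
    have G := hP0 i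
    simp only [shareMap]
    split_ifs <;> omega
  have key : ∀ k : ℕ, (shareMap n)^[k] S = fun i => S (i + (k : ZMod n)) := by
    intro k
    induction k with
    | zero => simp
    | succ m ihm =>
      rw [Function.iterate_succ_apply', ihm, shareMap_shift]
      funext i
      rw [part1 (i + (m : ZMod n))]
      push_cast
      ring_nf
  have part2 : (shareMap n)^[n] S = S := by
    rw [key n]
    funext i
    rw [ZMod.natCast_self, add_zero]
  exact ⟨part1, part2, n, by omega, part2⟩
end

section
/- Rotation invariance of τ: if S is a balanced state of the balanced candy sharing game with n children and σ S is the rotated state defined by (σ S) i = S (i + 1), then τ(σ S) = τ(S). -/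
/-- Rotation invariance of τ for balanced states. -/
theorem tau_rotation_invariant (n : ℕ) (hn : 3 ≤ n) [NeZero n] (S : ZMod n → ℕ)
    (hbal : IsBalanced n S) :
    tauInv n (fun i => S (i + 1)) = tauInv n S := by
  unfold tauInv
  congr 1
  have key : ∀ T : ZMod n → ℕ,
      ∑ i : ZMod n, (i.val : ZMod n) * (T i : ZMod n) = ∑ i : ZMod n, i * (T i : ZMod n) := by
    intro T
    refine Finset.sum_congr rfl fun i _ => ?_
    rw [ZMod.natCast_val, ZMod.cast_id]
  rw [key, key]
  have := Fintype.sum_equiv (Equiv.addRight (1 : ZMod n))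
    (fun i : ZMod n => i * (S (i + 1) : ZMod n))
    (fun j : ZMod n => (j - 1) * (S j : ZMod n)) (by intro i; simp)
  rw [this]
  have hS : ∑ j : ZMod n, (S j : ZMod n) = 0 := by
    rw [← Nat.cast_sum, hbal, ZMod.natCast_self]
  calc ∑ j : ZMod n, (j - 1) * (S j : ZMod n)
      = ∑ j : ZMod n, (j * (S j : ZMod n) - (S j : ZMod n)) := by
        refine Finset.sum_congr rfl fun j _ => by ring
    _ = ∑ j : ZMod n, j * (S j : ZMod n) := by
        rw [Finset.sum_sub_distrib, hS, sub_zero]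
end

section
/- Invariance of τ under sharing: for every state S : ZMod n → ℕ of the balanced candy sharing game, τ(f S) = τ(S). -/
/-- Invariance of τ under the sharing map. -/
theorem tau_shareMap_invariant (n : ℕ) (hn : 3 ≤ n) [NeZero n] (S : ZMod n → ℕ) :
    tauInv n (shareMap n S) = tauInv n S := by
  unfold tauInv shareMap
  congr 1
  have hval : ∀ i : ZMod n, ((i.val : ℕ) : ZMod n) = i := ZMod.natCast_rightInverse
  set c : ZMod n → ZMod n := fun i => if 2 ≤ S i then 1 else 0 with hc
  have key : ∀ i : ZMod n,
      (((if 2 ≤ S i then S i - 2 else S i) + (if 2 ≤ S (i-1) then 1 else 0)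
        + (if 2 ≤ S (i+1) then 1 else 0) : ℕ) : ZMod n)
      = (S i : ZMod n) - 2 * c i + c (i-1) + c (i+1) := by
    intro i
    have h1 : ((if 2 ≤ S i then S i - 2 else S i : ℕ) : ZMod n)
        = (S i : ZMod n) - 2 * c i := by
      simp only [hc]
      split_ifs with h
      · rw [Nat.cast_sub h]; push_cast; ring
      · ring
    have h2 : ((if 2 ≤ S (i-1) then (1:ℕ) else 0 : ℕ) : ZMod n) = c (i-1) := by
      simp only [hc]; split_ifs <;> simp
    have h3 : ((if 2 ≤ S (i+1) then (1:ℕ) else 0 : ℕ) : ZMod n) = c (i+1) := by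
      simp only [hc]; split_ifs <;> simp
    push_cast [h1, h2, h3]
    ring
  simp only [key, hval]
  have e1 : ∑ i : ZMod n, (i+1) * c i = ∑ i : ZMod n, i * c (i-1) :=
    Fintype.sum_equiv (Equiv.addRight (1 : ZMod n)) _ _ (fun i => by simp)
  have e2 : ∑ i : ZMod n, (i-1) * c i = ∑ i : ZMod n, i * c (i+1) :=
    Fintype.sum_equiv (Equiv.subRight (1 : ZMod n)) _ _ (fun i => by simp)
  have expand : ∀ i : ZMod n,
      i * ((S i : ZMod n) - 2 * c i + c (i-1) + c (i+1))
      = i * (S i : ZMod n) - 2 * (i * c i) + i * c (i-1) + i * c (i+1) := by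
    intro i; ring
  calc ∑ i : ZMod n, i * ((S i : ZMod n) - 2 * c i + c (i-1) + c (i+1))
      = ∑ i : ZMod n, (i * (S i : ZMod n) - 2 * (i * c i) + i * c (i-1) + i * c (i+1)) := by
        simp only [expand]
    _ = ∑ i : ZMod n, i * (S i : ZMod n) - 2 * ∑ i : ZMod n, i * c i
        + ∑ i : ZMod n, i * c (i-1) + ∑ i : ZMod n, i * c (i+1) := by
        rw [Finset.sum_add_distrib, Finset.sum_add_distrib, Finset.sum_sub_distrib,
          Finset.mul_sum]
    _ = ∑ i : ZMod n, i * (S i : ZMod n)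
        + ∑ i : ZMod n, ((i+1) * c i + (i-1) * c i - 2 * (i * c i)) := by
        rw [← e1, ← e2, Finset.sum_sub_distrib, Finset.sum_add_distrib, Finset.mul_sum]
        ring
    _ = ∑ i : ZMod n, i * (S i : ZMod n) := by
        have : ∀ i : ZMod n, (i+1) * c i + (i-1) * c i - 2 * (i * c i) = 0 := by
          intro i; ring
        simp [this]
end

section
/- The invariant of a clockwise wave state counts its [0,2]-blocks: if T is a clockwise wave state of the balanced candy sharing game with n children whose block decomposition contains exactly p blocks equal to [0,2], then τ(T) = p as an element of ZMod n. -/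
namespace TauWaveAux

variable (n : ℕ) [NeZero n]

/-- Weighted sum of a list with weights `s, s+1, s+2, …` in `ZMod n`. -/
def wsum : ZMod n → List ℕ → ZMod n
  | _, [] => 0
  | s, x :: xs => s * (x : ZMod n) + wsum (s + 1) xs

omit [NeZero n] in
lemma wsum_append (s : ZMod n) (l1 l2 : List ℕ) :
    wsum n s (l1 ++ l2) = wsum n s l1 + wsum n (s + (l1.length : ZMod n)) l2 := by
  induction l1 generalizing s with
  | nil => simp [wsum]
  | cons x xs ih =>
    simp only [List.cons_append, wsum, List.append_eq, ih (s + 1), List.length_cons]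
    push_cast
    ring_nf

omit [NeZero n] in
lemma wsum_eq_sum (l : List ℕ) (s : ZMod n) :
    wsum n s l = ∑ j ∈ Finset.range l.length,
      (s + (j : ZMod n)) * (l.getD j 0 : ZMod n) := by
  induction l generalizing s with
  | nil => simp [wsum]
  | cons x xs ih =>
    rw [List.length_cons, Finset.sum_range_succ']
    simp only [wsum, ih (s + 1), List.getD_cons_succ, List.getD_cons_zero]
    rw [add_comm]
    congr 1
    · apply Finset.sum_congr rfl
      intro j _
      push_cast
      ring
    · push_cast; ring

omit [NeZero n] in
lemma sum_shift_base (m : ℕ) (t : ZMod n) :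
    ∑ j ∈ Finset.range m, (t + (j : ZMod n))
      = m • t + ∑ j ∈ Finset.range m, (j : ZMod n) := by
  rw [Finset.sum_add_distrib, Finset.sum_const, Finset.card_range]

omit [NeZero n] in
lemma sum_shift (m k : ℕ) (t : ZMod n) :
    ∑ j ∈ Finset.range m, (t + ((k + j : ℕ) : ZMod n))
      = m • (t + (k : ZMod n)) + ∑ j ∈ Finset.range m, (j : ZMod n) := by
  rw [← sum_shift_base n m (t + (k : ZMod n))]
  exact Finset.sum_congr rfl fun j _ => by push_cast; ring

omit [NeZero n] in
lemma wsum_flatten (L : List (List ℕ)) (hb : ∀ b ∈ L, b = [0, 2] ∨ b = [1]) (s : ZMod n) :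
    wsum n s L.flatten
      = (∑ j ∈ Finset.range L.flatten.length, (s + (j : ZMod n)))
        + (L.count [0, 2] : ZMod n) := by
  induction L generalizing s with
  | nil => simp [wsum]
  | cons b L ih =>
    have hbL : ∀ b' ∈ L, b' = [0, 2] ∨ b' = [1] :=
      fun b' h => hb b' (List.mem_cons_of_mem _ h)
    rw [List.flatten_cons, wsum_append, ih hbL, List.length_append,
      Finset.sum_range_add, List.count_cons]
    rcases hb b List.mem_cons_self with rfl | rfl
    · have h1 : (([0, 2] : List ℕ) == [0, 2]) = true := by decide
      simp only [h1, if_true, wsum, List.length_cons, List.length_nil,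
        sum_shift, sum_shift_base, Finset.sum_range_succ, Finset.sum_range_zero]
      push_cast
      ring
    · have h1 : (([1] : List ℕ) == [0, 2]) = false := by decide
      simp only [h1, if_false, Bool.false_eq_true, wsum, List.length_cons, List.length_nil,
        sum_shift, sum_shift_base, Finset.sum_range_succ, Finset.sum_range_zero]
      push_cast
      ring

end TauWaveAux

theorem TauWaveAux.tau_clockwise_wave_aux (n : ℕ) (hn : 3 ≤ n) [NeZero n] (T : ZMod n → ℕ)
    (a : ZMod n) (L : List (List ℕ))
    (hblocks : ∀ b ∈ L, b = [0, 2] ∨ b = [1])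
    (hjoin : L.flatten = (List.range n).map fun j => T (a + (j : ZMod n)))
    (p : ℕ) (hp : L.count [0, 2] = p) :
    (if Even n then ((n / 2 : ℕ) : ZMod n) else 0)
      + ∑ i : ZMod n, (i.val : ZMod n) * (T i : ZMod n) = (p : ZMod n) := by
  subst hp
  have hjoin' : L.flatten = (List.range n).map (fun j : ℕ => T (a + ((j : ℕ) : ZMod n))) := by
    rw [hjoin]
    show List.map _ ((List.range n).flatMap fun a => [((a : ℕ) : ZMod n)]) = _
    rw [← List.map_eq_flatMap, List.map_map]
    rfl
  clear hjoin
  have hlen : L.flatten.length = n := by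
    rw [hjoin', List.length_map, List.length_range]
  have hzsum : ∑ i : ZMod n, (i.val : ZMod n) * (T i : ZMod n)
      = ∑ j ∈ Finset.range n, ((a + (j : ZMod n)) * (T (a + (j : ZMod n)) : ZMod n)) := by
    apply Finset.sum_nbij' (i := fun i : ZMod n => (i - a).val)
      (j := fun j : ℕ => a + (j : ZMod n))
    · intro i _; exact Finset.mem_range.mpr (ZMod.val_lt _)
    · intro j _; exact Finset.mem_univ _
    · intro i _; simp [ZMod.natCast_zmod_val]
    · intro j hj
      rw [Finset.mem_range] at hj
      simp only [add_sub_cancel_left]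
      rw [ZMod.val_cast_of_lt hj]
    · intro i _
      simp [ZMod.natCast_zmod_val]
  have hws : TauWaveAux.wsum n a L.flatten
      = ∑ j ∈ Finset.range n, ((a + (j : ZMod n)) * (T (a + (j : ZMod n)) : ZMod n)) := by
    rw [TauWaveAux.wsum_eq_sum, hlen]
    apply Finset.sum_congr rfl
    intro j hj
    rw [Finset.mem_range] at hj
    congr 1
    have hj' : j < ((List.range n).map (fun j : ℕ => T (a + ((j : ℕ) : ZMod n)))).length := by
      simpa using hj
    rw [hjoin', List.getD_eq_getElem _ _ hj', List.getElem_map, List.getElem_range]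
  rw [hzsum, ← hws, TauWaveAux.wsum_flatten n L hblocks a, hlen,
    TauWaveAux.sum_shift_base]
  have hna : n • a = 0 := by
    rw [nsmul_eq_mul, ZMod.natCast_self, zero_mul]
  have h2 : (∑ j ∈ Finset.range n, (j : ZMod n)) = ((n * (n - 1) / 2 : ℕ) : ZMod n) := by
    rw [← Nat.cast_sum]
    congr 1
    rw [Finset.sum_range_id]
  rw [hna, h2, zero_add]
  have hkey : (if Even n then ((n / 2 : ℕ) : ZMod n) else 0)
      + ((n * (n - 1) / 2 : ℕ) : ZMod n) = 0 := by
    rcases Nat.even_or_odd n with he | ho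
    · rw [if_pos he]
      obtain ⟨m, hm⟩ := he
      have hm2 : n = 2 * m := by omega
      have e1 : n / 2 = m := by omega
      have e2 : n * (n - 1) / 2 = m * (n - 1) := by
        rw [hm2, Nat.mul_assoc, Nat.mul_div_cancel_left _ (by norm_num : 0 < 2)]
      have e3 : ((n - 1 : ℕ) : ZMod n) = -1 := by
        rw [Nat.cast_sub (by omega), Nat.cast_one, ZMod.natCast_self, zero_sub]
      rw [e1, e2, Nat.cast_mul, e3]
      ring
    · rw [if_neg (Nat.not_even_iff_odd.mpr ho)]
      obtain ⟨m, hm⟩ := ho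
      have e2 : n * (n - 1) / 2 = n * m := by
        have : n - 1 = 2 * m := by omega
        rw [this, ← Nat.mul_assoc, Nat.mul_comm n 2, Nat.mul_assoc,
          Nat.mul_div_cancel_left _ (by norm_num : 0 < 2)]
      rw [zero_add, e2, Nat.cast_mul, ZMod.natCast_self, zero_mul]
  calc (if Even n then ((n / 2 : ℕ) : ZMod n) else 0)
        + (((n * (n - 1) / 2 : ℕ) : ZMod n) + (L.count [0, 2] : ZMod n))
      = ((if Even n then ((n / 2 : ℕ) : ZMod n) else 0)
          + ((n * (n - 1) / 2 : ℕ) : ZMod n)) + (L.count [0, 2] : ZMod n) := by ring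
    _ = (L.count [0, 2] : ZMod n) := by rw [hkey, zero_add]


/-- The invariant τ of a clockwise wave state counts its [0,2]-blocks. -/
theorem tau_clockwise_wave (n : ℕ) (hn : 3 ≤ n) [NeZero n] (T : ZMod n → ℕ)
    (a : ZMod n) (L : List (List ℕ))
    (hblocks : ∀ b ∈ L, b = [0, 2] ∨ b = [1])
    (hjoin : L.flatten = (List.range n).map fun j => T (a + (j : ZMod n)))
    (p : ℕ) (hp : L.count [0, 2] = p) :
    tauInv n T = (p : ZMod n) := by
  simp only [tauInv]
  exact TauWaveAux.tau_clockwise_wave_aux n hn T a L hblocks hjoin p hp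
end

section
/- The invariant of an anticlockwise wave state: if T is an anticlockwise wave state of the balanced candy sharing game with n children whose block decomposition contains exactly p blocks equal to [2,0], then τ(T) = −p as an element of ZMod n. -/
/-- weighted sum with offset, in ZMod n -/
def wsum (n : ℕ) : List ℕ → ℕ → ZMod n
  | [], _ => 0
  | x :: xs, s => (s : ZMod n) * (x : ZMod n) + wsum n xs (s + 1)

lemma wsum_append (n : ℕ) (w1 w2 : List ℕ) (s : ℕ) :
    wsum n (w1 ++ w2) s = wsum n w1 s + wsum n w2 (s + w1.length) := by
  induction w1 generalizing s with
  | nil => simp [wsum]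
  | cons x xs ih =>
      simp only [List.cons_append, wsum, List.length_cons, List.append_eq]
      rw [ih, show s + (xs.length + 1) = s + 1 + xs.length from by omega]
      ring

lemma wsum_blocks (n : ℕ) (L : List (List ℕ)) (h : ∀ b ∈ L, b = [2, 0] ∨ b = [1]) (s : ℕ) :
    wsum n L.flatten s
      = (∑ j ∈ Finset.range L.flatten.length, ((s + j : ℕ) : ZMod n))
        - (L.count [2, 0] : ZMod n) := by
  induction L generalizing s with
  | nil => simp [wsum]
  | cons b L ih =>
      have hb := h b (by simp)
      have hL : ∀ b ∈ L, b = [2, 0] ∨ b = [1] := fun b hb => h b (by simp [hb])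
      rw [List.flatten_cons, wsum_append, ih hL, List.length_append,
        Finset.sum_range_add]
      have e2 : ∀ x : ℕ, s + 2 + x = s + (2 + x) := fun x => by omega
      have e1 : ∀ x : ℕ, s + 1 + x = s + (1 + x) := fun x => by omega
      rcases hb with hb | hb <;> subst hb <;>
        simp only [wsum, List.count_cons, List.length_cons, List.length_nil,
          Finset.sum_range_succ, Finset.sum_range_zero, e1, e2] <;>
        norm_num <;> push_cast [-Nat.cast_add] <;> ring

lemma wsum_range_map (n m : ℕ) (f : ℕ → ℕ) :
    wsum n ((List.range m).map f) 0 = ∑ j ∈ Finset.range m, (j : ZMod n) * (f j : ZMod n) := by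
  induction m with
  | zero => simp [wsum]
  | succ m ih =>
      rw [List.range_succ, List.map_append, wsum_append, ih, Finset.sum_range_succ]
      simp [wsum]

lemma flatten_sum_eq_length (L : List (List ℕ)) (h : ∀ b ∈ L, b = [2, 0] ∨ b = [1]) :
    L.flatten.sum = L.flatten.length := by
  induction L with
  | nil => simp
  | cons b L ih =>
      have hb := h b (by simp)
      have hL : ∀ b ∈ L, b = [2, 0] ∨ b = [1] := fun b hb => h b (by simp [hb])
      rcases hb with hb | hb <;> subst hb <;> simp [ih hL] <;> omega

lemma sum_zmod_eq_sum_range (n : ℕ) [NeZero n] (f : ZMod n → ZMod n) (a : ZMod n) :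
    ∑ i : ZMod n, f i = ∑ j ∈ Finset.range n, f (a + (j : ZMod n)) := by
  refine Finset.sum_nbij' (fun i => (i - a).val) (fun j => a + (j : ZMod n)) ?_ ?_ ?_ ?_ ?_
  · intro i _; simp [ZMod.val_lt]
  · intro j _; simp
  · intro i _
    show a + (((i - a).val : ℕ) : ZMod n) = i
    rw [ZMod.natCast_val, ZMod.cast_id]; ring
  · intro j hj
    rw [Finset.mem_range] at hj
    simp [ZMod.val_natCast_of_lt hj]
  · intro i _
    show f i = f (a + (((i - a).val : ℕ) : ZMod n))
    rw [ZMod.natCast_val, ZMod.cast_id]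
    congr 1
    ring


/-- The invariant τ of an anticlockwise wave state is minus the number of its
[2,0]-blocks. -/
theorem tau_anticlockwise_wave (n : ℕ) (hn : 3 ≤ n) [NeZero n] (T : ZMod n → ℕ)
    (a : ZMod n) (L : List (List ℕ))
    (hblocks : ∀ b ∈ L, b = [2, 0] ∨ b = [1])
    (hjoin : L.flatten = (List.range n).map fun j => T (a + (j : ZMod n)))
    (p : ℕ) (hp : L.count [2, 0] = p) :
    tauInv n T = -(p : ZMod n) := by
  subst hp
  have hjoin' : L.flatten = (List.range n).map (fun j : ℕ => T (a + ((j : ℕ) : ZMod n))) := by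
    rw [hjoin]
    show List.map _ ((List.range n).flatMap fun a => [((a : ℕ) : ZMod n)]) = _
    rw [← List.map_eq_flatMap, List.map_map]
    rfl
  clear hjoin
  have hlen : L.flatten.length = n := by rw [hjoin']; simp
  have hTn : ∑ j ∈ Finset.range n, T (a + (j : ZMod n)) = n := by
    have h2 := flatten_sum_eq_length L hblocks
    rw [hjoin', List.length_map, List.length_range] at h2
    have h1 : (List.map (fun j : ℕ => T (a + ((j : ℕ) : ZMod n))) (List.range n)).sum
        = ∑ j ∈ Finset.range n, T (a + (j : ZMod n)) := rfl
    rw [h1] at h2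
    exact h2
  have hmain : ∑ i : ZMod n, (i.val : ZMod n) * (T i : ZMod n)
      = (∑ j ∈ Finset.range n, ((0 + j : ℕ) : ZMod n)) - (L.count [2, 0] : ZMod n) := by
    have h1 : ∑ i : ZMod n, (i.val : ZMod n) * (T i : ZMod n)
        = ∑ i : ZMod n, i * (T i : ZMod n) := by
      refine Finset.sum_congr rfl fun i _ => ?_
      rw [ZMod.natCast_val, ZMod.cast_id]
    rw [h1, sum_zmod_eq_sum_range n (fun i => i * (T i : ZMod n)) a]
    have h2 : ∀ j ∈ Finset.range n, (a + (j : ZMod n)) * (T (a + (j : ZMod n)) : ZMod n)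
        = a * (T (a + (j : ZMod n)) : ZMod n) + (j : ZMod n) * (T (a + (j : ZMod n)) : ZMod n) :=
      fun j _ => by ring
    rw [Finset.sum_congr rfl h2, Finset.sum_add_distrib, ← Finset.mul_sum]
    have h3 : (∑ j ∈ Finset.range n, (T (a + (j : ZMod n)) : ZMod n)) = 0 := by
      rw [← Nat.cast_sum, hTn, ZMod.natCast_self]
    rw [h3, mul_zero, zero_add]
    have h4 := wsum_range_map n n (fun j => T (a + (j : ZMod n)))
    rw [← hjoin'] at h4
    rw [← h4, wsum_blocks n L hblocks 0, hlen]
  have hzero : (if Even n then ((n / 2 : ℕ) : ZMod n) else 0)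
      + ∑ j ∈ Finset.range n, ((0 + j : ℕ) : ZMod n) = 0 := by
    have hs : ∑ j ∈ Finset.range n, ((0 + j : ℕ) : ZMod n)
        = ((∑ j ∈ Finset.range n, j : ℕ) : ZMod n) := by
      rw [Nat.cast_sum]; simp
    rw [hs]
    by_cases h : Even n
    · obtain ⟨m, hm⟩ := h
      have hg : (∑ j ∈ Finset.range n, j) = m * (n - 1) := by
        have h2 := Finset.sum_range_id_mul_two n
        have h3 : (∑ j ∈ Finset.range n, j) * 2 = (m * (n - 1)) * 2 := by
          rw [h2, hm]; ring
        exact Nat.eq_of_mul_eq_mul_right (by norm_num) h3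
      rw [if_pos ⟨m, hm⟩, hg, show n / 2 = m from by omega]
      have hmn : (m + m * (n - 1) : ℕ) = m * n := by
        have h1 : 1 + (n - 1) = n := by omega
        calc m + m * (n - 1) = m * (1 + (n - 1)) := by ring
          _ = m * n := by rw [h1]
      rw [← Nat.cast_add, hmn, Nat.cast_mul, ZMod.natCast_self, mul_zero]
    · rw [if_neg h, zero_add]
      obtain ⟨m, hm⟩ := Nat.not_even_iff_odd.mp h
      have hg : (∑ j ∈ Finset.range n, j) = n * m := by
        have h2 := Finset.sum_range_id_mul_two n
        have h3 : (∑ j ∈ Finset.range n, j) * 2 = (n * m) * 2 := by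
          rw [h2, show n - 1 = 2 * m from by omega]; ring
        exact Nat.eq_of_mul_eq_mul_right (by norm_num) h3
      rw [hg, Nat.cast_mul, ZMod.natCast_self, zero_mul]
  unfold tauInv
  rw [hmain]
  linear_combination hzero
end

section
/- Symmetric distributions with an even number of children: let n be even, let S be a balanced state of the balanced candy sharing game with n children that is symmetric about a diameter, and let T = f^[k] S be periodic for some k. Then the canonical representative of τ(S) is 0 or n/2; if τ(S) = 0 then T i = 1 for all i, and if the representative of τ(S) is n/2 then there exists a ∈ ZMod n such that T (a + 2·j) = 0 and T (a + 2·j + 1) = 2 for every integer j with 0 ≤ j < n/2. -/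
set_option linter.unusedSectionVars false
set_option linter.unusedTactic false

namespace CandyAux

variable {n : ℕ} [NeZero n]

def aI (S : ZMod n → ℕ) (i : ZMod n) : ℤ := if 2 ≤ S i then 1 else 0

lemma aI_nonneg (S : ZMod n → ℕ) (i : ZMod n) : 0 ≤ aI S i := by
  unfold aI; split_ifs <;> norm_num

lemma shareMap_cast (S : ZMod n → ℕ) (i : ZMod n) :
    ((shareMap n S i : ℤ)) = (S i : ℤ) - 2 * aI S i + aI S (i - 1) + aI S (i + 1) := by
  unfold shareMap aI
  split_ifs <;> push_cast <;> omega

lemma valcast (a : ZMod n) : ((a.val : ℕ) : ZMod n) = a := ZMod.natCast_rightInverse a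

section shifts
variable {M : Type*} [AddCommMonoid M]

lemma sum_shift (g : ZMod n → M) (c : ZMod n) :
    ∑ i : ZMod n, g (i + c) = ∑ i : ZMod n, g i :=
  Fintype.sum_equiv (Equiv.addRight c) (fun i => g (i + c)) g (fun _ => rfl)

lemma sum_shift_sub (g : ZMod n → M) (c : ZMod n) :
    ∑ i : ZMod n, g (i - c) = ∑ i : ZMod n, g i :=
  Fintype.sum_equiv (Equiv.subRight c) (fun i => g (i - c)) g (fun _ => rfl)

lemma cast_inj_on_range : Set.InjOn (fun j : ℕ => (j : ZMod n)) (Finset.range n) := by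
  intro a ha b hb hab
  simp only [Finset.coe_range, Set.mem_Iio] at ha hb
  have := congrArg ZMod.val hab
  rwa [ZMod.val_cast_of_lt ha, ZMod.val_cast_of_lt hb] at this

lemma image_range_cast : (Finset.range n).image (fun j : ℕ => (j : ZMod n)) = Finset.univ := by
  apply Finset.eq_univ_of_card
  rw [Finset.card_image_of_injOn cast_inj_on_range, Finset.card_range, ZMod.card]

lemma sum_univ_eq_range (g : ZMod n → M) :
    ∑ i : ZMod n, g i = ∑ j ∈ Finset.range n, g (j : ZMod n) := by
  rw [← image_range_cast, Finset.sum_image (fun a ha b hb h => cast_inj_on_range ha hb h)]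

end shifts

lemma sum_conserve (S : ZMod n → ℕ) :
    ∑ i : ZMod n, (shareMap n S i : ℤ) = ∑ i : ZMod n, (S i : ℤ) := by
  calc ∑ i : ZMod n, (shareMap n S i : ℤ)
      = ∑ i : ZMod n, ((S i : ℤ) - 2 * aI S i + aI S (i - 1) + aI S (i + 1)) :=
        Finset.sum_congr rfl fun i _ => shareMap_cast S i
    _ = ∑ i : ZMod n, (S i : ℤ) := by
        rw [Finset.sum_add_distrib, Finset.sum_add_distrib, Finset.sum_sub_distrib]
        rw [sum_shift_sub (fun i => aI S i) 1, sum_shift (fun i => aI S i) 1,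
          ← Finset.mul_sum]
        ring

lemma balanced_shareMap {S : ZMod n → ℕ} (h : IsBalanced n S) :
    IsBalanced n (shareMap n S) := by
  unfold IsBalanced at *
  have hz := sum_conserve S
  have h2 : ((∑ i : ZMod n, shareMap n S i : ℕ) : ℤ) = ((n : ℕ) : ℤ) := by
    push_cast
    rw [hz]
    exact_mod_cast congrArg (Nat.cast : ℕ → ℤ) h
  exact_mod_cast h2

lemma balanced_iterate {S : ZMod n → ℕ} (h : IsBalanced n S) (k : ℕ) :
    IsBalanced n ((shareMap n)^[k] S) := by
  induction k with
  | zero => exact h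
  | succ k ih => rw [Function.iterate_succ_apply']; exact balanced_shareMap ih

end CandyAux


namespace CandyAux
variable {n : ℕ} [NeZero n]

/-- height function of a state (basepoint 0) -/
def ht (S : ZMod n → ℕ) (i : ZMod n) : ℤ :=
  ∑ j ∈ Finset.range i.val, ((S ((j : ZMod n) + 1) : ℤ) - 1)

def gg (S : ZMod n → ℕ) (j : ℕ) : ℤ := aI S ((j : ZMod n) + 1) - aI S ((j : ZMod n))

lemma cast_val_sub_one {i : ZMod n} (hi : i ≠ 0) :
    ((i.val - 1 : ℕ) : ZMod n) = i - 1 ∧ (i - 1).val = i.val - 1 := by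
  have hpos : 0 < i.val := ZMod.val_pos.mpr hi
  have hlt : i.val < n := ZMod.val_lt i
  have hcast : ((i.val - 1 : ℕ) : ZMod n) = i - 1 := by
    have h1 : ((i.val - 1 : ℕ) : ZMod n) + 1 = i := by
      have h2 : ((i.val - 1 : ℕ) : ZMod n) + ((1 : ℕ) : ZMod n) = ((i.val - 1 + 1 : ℕ) : ZMod n) := by
        push_cast; ring
      rw [show ((1:ℕ) : ZMod n) = (1 : ZMod n) by push_cast; rfl] at h2
      rw [h2, show i.val - 1 + 1 = i.val by omega, valcast]
    linear_combination h1
  refine ⟨hcast, ?_⟩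
  rw [← hcast, ZMod.val_natCast, Nat.mod_eq_of_lt (by omega)]

lemma neg_one_val : ((-1 : ZMod n)).val = n - 1 := by
  have h1 : 1 ≤ n := Nat.one_le_iff_ne_zero.mpr (NeZero.ne n)
  have h3 : ((n - 1 : ℕ) : ZMod n) = -1 := by
    have h2 : ((n - 1 : ℕ) : ZMod n) + 1 = ((n : ℕ) : ZMod n) := by
      rw [show ((n : ℕ) : ZMod n) = ((n - 1 + 1 : ℕ) : ZMod n) by rw [Nat.sub_add_cancel h1]]
      push_cast; ring
    rw [ZMod.natCast_self] at h2
    linear_combination h2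
  rw [← h3, ZMod.val_natCast, Nat.mod_eq_of_lt (by omega)]

lemma ht_step {S : ZMod n → ℕ} (hbal : IsBalanced n S) (i : ZMod n) :
    ht S i - ht S (i - 1) = (S i : ℤ) - 1 := by
  by_cases hi : i = 0
  · subst hi
    have h1 : 1 ≤ n := Nat.one_le_iff_ne_zero.mpr (NeZero.ne n)
    have hv0 : (0 : ZMod n).val = 0 := ZMod.val_zero
    have hb : ht S 0 = 0 := by unfold ht; rw [hv0]; simp
    have hv : ((0 : ZMod n) - 1).val = n - 1 := by rw [zero_sub]; exact neg_one_val
    have hsum : ∑ j ∈ Finset.range n, ((S ((j : ZMod n)) : ℤ)) = (n : ℤ) := by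
      rw [← sum_univ_eq_range (fun i => (S i : ℤ))]
      have := congrArg (Nat.cast : ℕ → ℤ) hbal
      push_cast at this
      exact this
    have hsum' : ∑ j ∈ Finset.range (n - 1), ((S ((j : ZMod n) + 1) : ℤ)) = (n : ℤ) - (S 0 : ℤ) := by
      have hrw : ∑ j ∈ Finset.range n, ((S ((j : ZMod n)) : ℤ))
          = ∑ j ∈ Finset.range (n-1), ((S (((j+1 : ℕ) : ZMod n)) : ℤ)) + (S ((0:ℕ) : ZMod n) : ℤ) := by
        rw [← Finset.sum_range_succ' (fun j => (S ((j : ZMod n)) : ℤ)) (n-1),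
          Nat.sub_add_cancel h1]
      rw [hrw] at hsum
      have hc : ∀ j : ℕ, (((j+1 : ℕ) : ZMod n)) = ((j : ZMod n) + 1) := by intro j; push_cast; ring
      simp only [hc, Nat.cast_zero] at hsum
      linarith [hsum]
    have hend : ht S ((0:ZMod n) - 1) = ((n : ℤ) - S 0) - ((n : ℤ) - 1) := by
      unfold ht
      rw [hv, Finset.sum_sub_distrib, hsum', Finset.sum_const, Finset.card_range,
        nsmul_eq_mul, mul_one, Nat.cast_sub h1]
      push_cast
      ring
    rw [hb, hend]
    ring
  · obtain ⟨hc, hv⟩ := cast_val_sub_one hi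
    have hpos : 0 < i.val := ZMod.val_pos.mpr hi
    set v := i.val - 1 with hvdef
    have hival : i.val = v + 1 := by omega
    have harg : ((v : ℕ) : ZMod n) + 1 = i := by rw [hc]; ring
    unfold ht
    rw [hv, hival, Finset.sum_range_succ, harg]
    ring

lemma ht_diff (S : ZMod n → ℕ) (i : ZMod n) :
    ht (shareMap n S) i = ht S i + (aI S (i + 1) - aI S i) - (aI S 1 - aI S 0) := by
  have key : ht (shareMap n S) i - ht S i = gg S i.val - gg S 0 := by
    unfold ht
    rw [← Finset.sum_sub_distrib, ← Finset.sum_range_sub (gg S) i.val]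
    apply Finset.sum_congr rfl
    intro j _
    have hx : (((j+1 : ℕ)) : ZMod n) = (j : ZMod n) + 1 := by push_cast; ring
    unfold gg
    rw [hx, shareMap_cast S ((j:ZMod n)+1),
      show ((j : ZMod n) + 1 - 1) = (j : ZMod n) by ring]
    ring
  unfold gg at key
  rw [valcast] at key
  simp only [Nat.cast_zero, zero_add] at key
  linarith [key]

end CandyAux


namespace CandyAux
variable {n : ℕ} [NeZero n]

def en (S : ZMod n → ℕ) : ℤ := ∑ i : ZMod n, ∑ j : ZMod n, (ht S i - ht S j)^2

lemma double_sum_expand (x y : ZMod n → ℤ) :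
    ∑ i : ZMod n, ∑ j : ZMod n, ((x i - x j) * (y i - y j))
      = 2 * (n : ℤ) * (∑ i : ZMod n, x i * y i)
        - 2 * (∑ i : ZMod n, x i) * (∑ i : ZMod n, y i) := by
  have inner : ∀ i : ZMod n, ∑ j : ZMod n, ((x i - x j) * (y i - y j))
      = (n : ℤ) * (x i * y i) - x i * (∑ j : ZMod n, y j)
        - (∑ j : ZMod n, x j) * y i + ∑ j : ZMod n, x j * y j := by
    intro i
    have hpt : ∀ j : ZMod n, (x i - x j) * (y i - y j)
        = x i * y i - x i * y j - x j * y i + x j * y j := fun j => by ring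
    rw [Finset.sum_congr rfl fun j _ => hpt j]
    rw [Finset.sum_add_distrib, Finset.sum_sub_distrib, Finset.sum_sub_distrib,
      Finset.sum_const, ← Finset.mul_sum, ← Finset.sum_mul,
      Finset.card_univ, ZMod.card, nsmul_eq_mul]
  rw [Finset.sum_congr rfl fun i _ => inner i]
  rw [Finset.sum_add_distrib, Finset.sum_sub_distrib, Finset.sum_sub_distrib,
    Finset.sum_const, ← Finset.sum_mul, Finset.card_univ, ZMod.card, nsmul_eq_mul]
  have hmul : ∑ i : ZMod n, (n : ℤ) * (x i * y i) = (n:ℤ) * ∑ i : ZMod n, x i * y i :=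
    by rw [← Finset.mul_sum]
  have hmul2 : ∑ i : ZMod n, x i * (∑ j : ZMod n, y j)
      = (∑ i : ZMod n, x i) * (∑ j : ZMod n, y j) := by rw [← Finset.sum_mul]
  have hmul3 : ∑ i : ZMod n, (∑ j : ZMod n, x j) * y i
      = (∑ j : ZMod n, x j) * (∑ i : ZMod n, y i) := by rw [← Finset.mul_sum]
  have hmul' : ∑ i : ZMod n, (n:ℤ) * x i * y i = (n:ℤ) * ∑ i : ZMod n, x i * y i := by
    rw [Finset.mul_sum]
    exact Finset.sum_congr rfl fun i _ => by ring
  rw [hmul3, hmul]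
  ring

/-- The fundamental energy dissipation identity. -/
lemma en_step {S : ZMod n → ℕ} (hbal : IsBalanced n S) :
    en (shareMap n S) = en S
      - 4 * (n:ℤ) * ((∑ i : ZMod n, aI S i * ((S i:ℤ) - 2)) + ∑ i : ZMod n, aI S i * aI S (i+1)) := by
  set d : ZMod n → ℤ := fun i => aI S (i + 1) - aI S i with hd
  set c : ℤ := aI S 1 - aI S 0 with hc
  have hdiff : ∀ i, ht (shareMap n S) i = ht S i + d i - c := fun i => ht_diff S i
  have hsum_d : ∑ i : ZMod n, d i = 0 := by
    rw [hd]
    rw [Finset.sum_sub_distrib, sum_shift (fun i => aI S i) 1]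
    ring
  have pt : ∀ i j : ZMod n, (ht (shareMap n S) i - ht (shareMap n S) j)^2
      = (ht S i - ht S j)^2 + 2*((ht S i - ht S j)*(d i - d j)) + (d i - d j)*(d i - d j) :=
    fun i j => by rw [hdiff i, hdiff j]; ring
  have expand : en (shareMap n S) = en S
      + 2 * (∑ i : ZMod n, ∑ j : ZMod n, (ht S i - ht S j) * (d i - d j))
      + ∑ i : ZMod n, ∑ j : ZMod n, (d i - d j) * (d i - d j) := by
    unfold en
    rw [Finset.sum_congr rfl fun i _ => Finset.sum_congr rfl fun j _ => pt i j]
    simp only [Finset.sum_add_distrib]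
    rw [show ∑ i : ZMod n, ∑ j : ZMod n, 2*((ht S i - ht S j)*(d i - d j))
        = 2 * ∑ i : ZMod n, ∑ j : ZMod n, ((ht S i - ht S j)*(d i - d j)) by
      rw [Finset.mul_sum]
      exact Finset.sum_congr rfl fun i _ => by rw [Finset.mul_sum]]
  have cross : ∑ i : ZMod n, ∑ j : ZMod n, (ht S i - ht S j) * (d i - d j)
      = 2 * (n:ℤ) * ∑ i : ZMod n, ht S i * d i := by
    rw [double_sum_expand (ht S) d, hsum_d]
    ring
  have hhd : ∑ i : ZMod n, ht S i * d i = - ∑ i : ZMod n, aI S i * ((S i:ℤ) - 1) := by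
    have h1 : ∑ i : ZMod n, ht S i * aI S (i+1) = ∑ i : ZMod n, ht S (i - 1) * aI S i :=
      Fintype.sum_equiv (Equiv.addRight 1) _ (fun j => ht S (j-1) * aI S j)
        (fun i => by
          show ht S i * aI S (i+1) = ht S (i + 1 - 1) * aI S (i + 1)
          rw [add_sub_cancel_right])
    have hpt : ∀ i : ZMod n, ht S (i-1) * aI S i - ht S i * aI S i
        = -(aI S i * ((S i:ℤ) - 1)) := by
      intro i
      rw [← ht_step hbal i]
      ring
    calc ∑ i : ZMod n, ht S i * d i
        = ∑ i : ZMod n, (ht S i * aI S (i+1) - ht S i * aI S i) :=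
          Finset.sum_congr rfl fun i _ => by simp only [hd]; ring
      _ = ∑ i : ZMod n, ht S (i-1) * aI S i - ∑ i : ZMod n, ht S i * aI S i := by
          rw [Finset.sum_sub_distrib, h1]
      _ = ∑ i : ZMod n, (ht S (i-1) * aI S i - ht S i * aI S i) :=
          (Finset.sum_sub_distrib _ _).symm
      _ = ∑ i : ZMod n, -(aI S i * ((S i:ℤ) - 1)) := Finset.sum_congr rfl fun i _ => hpt i
      _ = - ∑ i : ZMod n, aI S i * ((S i:ℤ) - 1) := Finset.sum_neg_distrib _
  have dsq : ∑ i : ZMod n, ∑ j : ZMod n, (d i - d j) * (d i - d j)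
      = 2*(n:ℤ) * ∑ i : ZMod n, d i * d i := by
    rw [double_sum_expand d d, hsum_d]
    ring
  have hdd : ∑ i : ZMod n, d i * d i
      = 2 * (∑ i : ZMod n, aI S i) - 2 * ∑ i : ZMod n, aI S i * aI S (i+1) := by
    have hpt : ∀ i : ZMod n, d i * d i
        = (aI S (i+1) + aI S i) - 2 * (aI S i * aI S (i+1)) := by
      intro i
      rw [hd]
      simp only []
      unfold aI
      split_ifs <;> ring
    rw [Finset.sum_congr rfl fun i _ => hpt i]
    rw [Finset.sum_sub_distrib, Finset.sum_add_distrib, sum_shift (fun i => aI S i) 1,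
      ← Finset.mul_sum]
    ring
  have hsplit : ∑ i : ZMod n, aI S i * ((S i:ℤ) - 2)
      = (∑ i : ZMod n, aI S i * ((S i:ℤ) - 1)) - ∑ i : ZMod n, aI S i := by
    rw [← Finset.sum_sub_distrib]
    exact Finset.sum_congr rfl fun i _ => by ring
  rw [expand, cross, hhd, dsq, hdd, hsplit]
  ring

lemma aI_mul_nonneg (S : ZMod n → ℕ) (i : ZMod n) : 0 ≤ aI S i * ((S i:ℤ) - 2) := by
  unfold aI
  split_ifs with h
  · have : (2:ℤ) ≤ (S i : ℤ) := by exact_mod_cast h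
    linarith
  · simp

lemma aI_pair_nonneg (S : ZMod n → ℕ) (i : ZMod n) : 0 ≤ aI S i * aI S (i+1) :=
  mul_nonneg (aI_nonneg S i) (aI_nonneg S (i+1))

lemma en_le {S : ZMod n → ℕ} (hbal : IsBalanced n S) : en (shareMap n S) ≤ en S := by
  rw [en_step hbal]
  have h1 : (0:ℤ) ≤ ∑ i : ZMod n, aI S i * ((S i:ℤ) - 2) :=
    Finset.sum_nonneg fun i _ => aI_mul_nonneg S i
  have h2 : (0:ℤ) ≤ ∑ i : ZMod n, aI S i * aI S (i+1) :=
    Finset.sum_nonneg fun i _ => aI_pair_nonneg S i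
  have h3 : (0:ℤ) ≤ (n:ℤ) := by positivity
  nlinarith

lemma en_eq_imp {S : ZMod n → ℕ} (hbal : IsBalanced n S)
    (heq : en (shareMap n S) = en S) :
    (∀ i, S i ≤ 2) ∧ (∀ i, ¬(2 ≤ S i ∧ 2 ≤ S (i+1))) := by
  have hid := en_step hbal
  rw [heq] at hid
  have h1 : (0:ℤ) ≤ ∑ i : ZMod n, aI S i * ((S i:ℤ) - 2) :=
    Finset.sum_nonneg fun i _ => aI_mul_nonneg S i
  have h2 : (0:ℤ) ≤ ∑ i : ZMod n, aI S i * aI S (i+1) :=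
    Finset.sum_nonneg fun i _ => aI_pair_nonneg S i
  have hn0 : (0:ℤ) < (n:ℤ) := by
    have := Nat.pos_of_ne_zero (NeZero.ne n)
    exact_mod_cast this
  have hzero : (∑ i : ZMod n, aI S i * ((S i:ℤ) - 2)) + ∑ i : ZMod n, aI S i * aI S (i+1) = 0 := by
    nlinarith
  have hz1 : ∑ i : ZMod n, aI S i * ((S i:ℤ) - 2) = 0 := by linarith
  have hz2 : ∑ i : ZMod n, aI S i * aI S (i+1) = 0 := by linarith
  have hp1 := (Finset.sum_eq_zero_iff_of_nonneg (fun i _ => aI_mul_nonneg S i)).mp hz1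
  have hp2 := (Finset.sum_eq_zero_iff_of_nonneg (fun i _ => aI_pair_nonneg S i)).mp hz2
  constructor
  · intro i
    have := hp1 i (Finset.mem_univ i)
    unfold aI at this
    split_ifs at this with h
    · have : (S i : ℤ) = 2 := by linarith
      exact_mod_cast this.le
    · omega
  · intro i ⟨ha, hb⟩
    have := hp2 i (Finset.mem_univ i)
    unfold aI at this
    rw [if_pos ha, if_pos hb] at this
    norm_num at this

end CandyAux


namespace CandyAux
variable {n : ℕ} [NeZero n]

def cnt (U : ZMod n → ℕ) (v : ℕ) : ℕ := (Finset.univ.filter (fun i : ZMod n => U i = v)).card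

lemma shareMap_apply (S : ZMod n → ℕ) (i : ZMod n) :
    shareMap n S i = (if 2 ≤ S i then S i - 2 else S i)
      + (if 2 ≤ S (i - 1) then 1 else 0)
      + (if 2 ≤ S (i + 1) then 1 else 0) := rfl

lemma cnt0_eq_cnt2 {U : ZMod n → ℕ} (hbal : IsBalanced n U) (hle : ∀ i, U i ≤ 2) :
    cnt U 0 = cnt U 2 := by
  have key : ∑ i : ZMod n, (U i + if U i = 0 then 1 else 0)
      = ∑ i : ZMod n, (1 + if U i = 2 then 1 else 0) := by
    apply Finset.sum_congr rfl
    intro i _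
    have h := hle i
    interval_cases (U i) <;> simp
  rw [Finset.sum_add_distrib, Finset.sum_add_distrib] at key
  rw [hbal] at key
  unfold cnt
  rw [Finset.card_filter, Finset.card_filter]
  simp only [Finset.sum_const, Finset.card_univ, ZMod.card, smul_eq_mul, mul_one] at key ⊢
  omega

lemma zeros_share {U : ZMod n → ℕ} (hP2 : ∀ i, ¬(2 ≤ U i ∧ 2 ≤ U (i+1))) (i : ZMod n) :
    shareMap n U i = 0 ↔ (U i = 2 ∨ (U i = 0 ∧ U (i-1) ≤ 1 ∧ U (i+1) ≤ 1)) := by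
  have h1 := hP2 (i-1)
  rw [sub_add_cancel] at h1
  have h2 := hP2 i
  unfold shareMap
  constructor
  · intro h
    split_ifs at h <;> omega
  · intro h
    split_ifs <;> omega

def lonelySet (U : ZMod n → ℕ) : Finset (ZMod n) :=
  Finset.univ.filter (fun i => U i = 0 ∧ U (i-1) ≤ 1 ∧ U (i+1) ≤ 1)

lemma cnt0_share {U : ZMod n → ℕ} (hP2 : ∀ i, ¬(2 ≤ U i ∧ 2 ≤ U (i+1))) :
    cnt (shareMap n U) 0 = cnt U 2 + (lonelySet U).card := by
  unfold cnt lonelySet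
  have hset : Finset.univ.filter (fun i : ZMod n => shareMap n U i = 0)
      = Finset.univ.filter (fun i : ZMod n => U i = 2)
        ∪ Finset.univ.filter (fun i => U i = 0 ∧ U (i-1) ≤ 1 ∧ U (i+1) ≤ 1) := by
    ext i
    simp only [Finset.mem_filter, Finset.mem_union, Finset.mem_univ, true_and]
    exact zeros_share hP2 i
  rw [hset, Finset.card_union_of_disjoint]
  rw [Finset.disjoint_left]
  intro i hi1 hi2
  simp only [Finset.mem_filter, Finset.mem_univ, true_and] at hi1 hi2
  omega

section Orbit

variable {T : ZMod n → ℕ} {m : ℕ}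

lemma it_add (hTper : (shareMap n)^[m] T = T) (j : ℕ) :
    (shareMap n)^[j + m] T = (shareMap n)^[j] T := by
  rw [Function.iterate_add_apply, hTper]

lemma en_anti (hTbal : IsBalanced n T) :
    ∀ a b : ℕ, a ≤ b → en ((shareMap n)^[b] T) ≤ en ((shareMap n)^[a] T) := by
  intro a b hab
  induction b, hab using Nat.le_induction with
  | base => exact le_refl _
  | succ b hab ih =>
    refine le_trans ?_ ih
    rw [Function.iterate_succ_apply']
    exact en_le (balanced_iterate hTbal b)

lemma en_const (hm : 1 ≤ m) (hTper : (shareMap n)^[m] T = T) (hTbal : IsBalanced n T) (j : ℕ) :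
    en (shareMap n ((shareMap n)^[j] T)) = en ((shareMap n)^[j] T) := by
  have hrw : shareMap n ((shareMap n)^[j] T) = (shareMap n)^[j+1] T :=
    (Function.iterate_succ_apply' _ _ _).symm
  rw [hrw]
  apply le_antisymm
  · exact en_anti hTbal j (j+1) (by omega)
  · have h1 : en ((shareMap n)^[j + m] T) ≤ en ((shareMap n)^[j+1] T) :=
      en_anti hTbal (j+1) (j+m) (by omega)
    rwa [it_add hTper j] at h1

lemma orbit_le_two (hm : 1 ≤ m) (hTper : (shareMap n)^[m] T = T) (hTbal : IsBalanced n T) (j : ℕ) :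
    ∀ i, (shareMap n)^[j] T i ≤ 2 :=
  (en_eq_imp (balanced_iterate hTbal j) (en_const hm hTper hTbal j)).1

lemma orbit_P2 (hm : 1 ≤ m) (hTper : (shareMap n)^[m] T = T) (hTbal : IsBalanced n T) (j : ℕ) :
    ∀ i, ¬(2 ≤ (shareMap n)^[j] T i ∧ 2 ≤ (shareMap n)^[j] T (i+1)) :=
  (en_eq_imp (balanced_iterate hTbal j) (en_const hm hTper hTbal j)).2

lemma orbit_L (hm : 1 ≤ m) (hTper : (shareMap n)^[m] T = T) (hTbal : IsBalanced n T) (j : ℕ) :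
    ∀ i, (shareMap n)^[j] T i = 0 →
      2 ≤ (shareMap n)^[j] T (i-1) ∨ 2 ≤ (shareMap n)^[j] T (i+1) := by
  have step : ∀ a : ℕ, cnt ((shareMap n)^[a+1] T) 2
      = cnt ((shareMap n)^[a] T) 2 + (lonelySet ((shareMap n)^[a] T)).card := by
    intro a
    have hb : IsBalanced n ((shareMap n)^[a+1] T) := balanced_iterate hTbal (a+1)
    have hle : ∀ i, (shareMap n)^[a+1] T i ≤ 2 := orbit_le_two hm hTper hTbal (a+1)
    rw [← cnt0_eq_cnt2 hb hle, Function.iterate_succ_apply']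
    exact cnt0_share (orbit_P2 hm hTper hTbal a)
  have mono : ∀ a b : ℕ, a ≤ b →
      cnt ((shareMap n)^[a] T) 2 ≤ cnt ((shareMap n)^[b] T) 2 := by
    intro a b hab
    induction b, hab using Nat.le_induction with
    | base => exact le_refl _
    | succ b hab ih =>
      refine le_trans ih ?_
      rw [step b]
      omega
  have hz : (lonelySet ((shareMap n)^[j] T)).card = 0 := by
    have h1 : cnt ((shareMap n)^[j+1] T) 2 ≤ cnt ((shareMap n)^[j+m] T) 2 :=
      mono (j+1) (j+m) (by omega)
    rw [it_add hTper j] at h1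
    have h2 := step j
    omega
  intro i hi
  by_contra hcon
  push_neg at hcon
  have hmem : i ∈ lonelySet ((shareMap n)^[j] T) := by
    unfold lonelySet
    simp only [Finset.mem_filter, Finset.mem_univ, true_and]
    exact ⟨hi, by omega, by omega⟩
  rw [Finset.card_eq_zero] at hz
  rw [hz] at hmem
  exact absurd hmem (Finset.notMem_empty i)

lemma orbit_pred (hm : 1 ≤ m) (hTper : (shareMap n)^[m] T = T) (j : ℕ) :
    ∃ j', (shareMap n)^[j] T = shareMap n ((shareMap n)^[j'] T) := by
  cases j with
  | zero =>
    refine ⟨m - 1, ?_⟩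
    have h : (shareMap n)^[(m-1)+1] T = shareMap n ((shareMap n)^[m-1] T) :=
      Function.iterate_succ_apply' _ _ _
    rw [show (m-1)+1 = m by omega] at h
    rw [Function.iterate_zero_apply, ← h, hTper]
  | succ j => exact ⟨j, Function.iterate_succ_apply' _ _ _⟩

lemma share_of_two {V : ZMod n → ℕ} (hP2 : ∀ i, ¬(2 ≤ V i ∧ 2 ≤ V (i+1)))
    {x : ZMod n} (hx : V x = 2) : shareMap n V x = 0 :=
  (zeros_share hP2 x).mpr (Or.inl hx)

lemma zero_pre {V : ZMod n → ℕ} (hP2 : ∀ i, ¬(2 ≤ V i ∧ 2 ≤ V (i+1)))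
    (hL : ∀ i, V i = 0 → 2 ≤ V (i-1) ∨ 2 ≤ V (i+1))
    {x : ZMod n} (hx : shareMap n V x = 0) : V x = 2 := by
  rcases (zeros_share hP2 x).mp hx with h | ⟨h0, h1, h2⟩
  · exact h
  · rcases hL x h0 with h | h <;> omega

lemma orbit_no00 (hm : 1 ≤ m) (hTper : (shareMap n)^[m] T = T) (hTbal : IsBalanced n T) (j : ℕ)
    (i : ZMod n) : ¬((shareMap n)^[j] T i = 0 ∧ (shareMap n)^[j] T (i+1) = 0) := by
  obtain ⟨j', hj'⟩ := orbit_pred hm hTper j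
  set V := (shareMap n)^[j'] T with hV
  rintro ⟨h1, h2⟩
  rw [hj'] at h1 h2
  have hP2 := orbit_P2 hm hTper hTbal j'
  have hL := orbit_L hm hTper hTbal j'
  have k1 := zero_pre hP2 hL h1
  have k2 := zero_pre hP2 hL h2
  exact hP2 i ⟨by omega, by omega⟩

lemma orbit_no010 (hm : 1 ≤ m) (hTper : (shareMap n)^[m] T = T) (hTbal : IsBalanced n T) (j : ℕ)
    (i : ZMod n) : ¬((shareMap n)^[j] T (i-1) = 0 ∧ (shareMap n)^[j] T i = 1
      ∧ (shareMap n)^[j] T (i+1) = 0) := by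
  obtain ⟨j', hj'⟩ := orbit_pred hm hTper j
  rintro ⟨h1, h2, h3⟩
  rw [hj'] at h1 h2 h3
  have hP2 := orbit_P2 hm hTper hTbal j'
  have hL := orbit_L hm hTper hTbal j'
  have k1 := zero_pre hP2 hL h1
  have k3 := zero_pre hP2 hL h3
  rw [shareMap_apply] at h2
  split_ifs at h2 <;> omega

lemma orbit_no121 (hm : 1 ≤ m) (hTper : (shareMap n)^[m] T = T) (hTbal : IsBalanced n T) (j : ℕ)
    (i : ZMod n) : ¬((shareMap n)^[j] T (i-1) = 1 ∧ (shareMap n)^[j] T i = 2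
      ∧ (shareMap n)^[j] T (i+1) = 1) := by
  obtain ⟨j', hj'⟩ := orbit_pred hm hTper j
  rintro ⟨h1, h2, h3⟩
  rw [hj'] at h1 h2 h3
  have hP2 := orbit_P2 hm hTper hTbal j'
  have hle := orbit_le_two hm hTper hTbal j'
  set V := (shareMap n)^[j'] T with hV
  have hm1 : ¬ 2 ≤ V (i-1) := by
    intro hr
    have : V (i-1) = 2 := by have := hle (i-1); omega
    have := share_of_two hP2 this
    omega
  have hp1 : ¬ 2 ≤ V (i+1) := by
    intro hr
    have : V (i+1) = 2 := by have := hle (i+1); omega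
    have := share_of_two hP2 this
    omega
  have hvi := hle i
  rw [shareMap_apply] at h2
  split_ifs at h2 <;> omega

end Orbit
end CandyAux


namespace CandyAux
variable {n : ℕ} [NeZero n]

def pat102 (U : ZMod n → ℕ) (i : ZMod n) : Prop := U (i-1) = 1 ∧ U i = 0 ∧ U (i+1) = 2
def pat201 (U : ZMod n → ℕ) (i : ZMod n) : Prop := U (i-1) = 2 ∧ U i = 0 ∧ U (i+1) = 1

section Orbit
variable {T : ZMod n → ℕ} {m : ℕ}

lemma moveR (hm : 1 ≤ m) (hTper : (shareMap n)^[m] T = T) (hTbal : IsBalanced n T)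
    (j : ℕ) (i : ZMod n) (h : pat102 ((shareMap n)^[j] T) i) :
    pat102 ((shareMap n)^[j+1] T) (i+1) := by
  obtain ⟨h1, h2, h3⟩ := h
  set U := (shareMap n)^[j] T with hU
  have hit : (shareMap n)^[j+1] T = shareMap n U := Function.iterate_succ_apply' _ _ _
  have c1 : shareMap n U i = 1 := by
    rw [shareMap_apply, h1, h2, h3]
    norm_num
  have c2 : shareMap n U (i+1) = 0 := share_of_two (orbit_P2 hm hTper hTbal j) h3
  have c3 : (shareMap n)^[j+1] T (i+2) = 2 := by
    have hL := orbit_L hm hTper hTbal (j+1) (i+1) (by rw [hit]; exact c2)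
    rw [add_sub_cancel_right] at hL
    have e1 : (shareMap n)^[j+1] T i = 1 := by rw [hit]; exact c1
    have e2 : i + 1 + 1 = i + 2 := by ring
    rw [e2] at hL
    have := orbit_le_two hm hTper hTbal (j+1) (i+2)
    omega
  refine ⟨?_, by rw [hit]; exact c2, ?_⟩
  · rw [add_sub_cancel_right, hit]; exact c1
  · rw [show i + 1 + 1 = i + 2 by ring]; exact c3

lemma moveL (hm : 1 ≤ m) (hTper : (shareMap n)^[m] T = T) (hTbal : IsBalanced n T)
    (j : ℕ) (i : ZMod n) (h : pat201 ((shareMap n)^[j] T) i) :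
    pat201 ((shareMap n)^[j+1] T) (i-1) := by
  obtain ⟨h1, h2, h3⟩ := h
  set U := (shareMap n)^[j] T with hU
  have hit : (shareMap n)^[j+1] T = shareMap n U := Function.iterate_succ_apply' _ _ _
  have c1 : shareMap n U i = 1 := by
    rw [shareMap_apply, h1, h2, h3]
    norm_num
  have c2 : shareMap n U (i-1) = 0 := share_of_two (orbit_P2 hm hTper hTbal j) h1
  have c3 : (shareMap n)^[j+1] T (i-2) = 2 := by
    have hL := orbit_L hm hTper hTbal (j+1) (i-1) (by rw [hit]; exact c2)
    rw [sub_add_cancel] at hL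
    have e1 : (shareMap n)^[j+1] T i = 1 := by rw [hit]; exact c1
    have e2 : i - 1 - 1 = i - 2 := by ring
    rw [e2] at hL
    have := orbit_le_two hm hTper hTbal (j+1) (i-2)
    omega
  refine ⟨?_, by rw [hit]; exact c2, ?_⟩
  · rw [show i - 1 - 1 = i - 2 by ring]; exact c3
  · rw [sub_add_cancel, hit]; exact c1

lemma moveR_iter (hm : 1 ≤ m) (hTper : (shareMap n)^[m] T = T) (hTbal : IsBalanced n T)
    (i : ZMod n) (h : pat102 T i) (t : ℕ) :
    pat102 ((shareMap n)^[t] T) (i + (t : ZMod n)) := by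
  induction t with
  | zero => simpa using h
  | succ t ih =>
    have := moveR hm hTper hTbal t (i + (t : ZMod n)) ih
    rwa [show i + ((t+1 : ℕ) : ZMod n) = i + (t : ZMod n) + 1 by push_cast; ring]

lemma moveL_iter (hm : 1 ≤ m) (hTper : (shareMap n)^[m] T = T) (hTbal : IsBalanced n T)
    (i : ZMod n) (h : pat201 T i) (t : ℕ) :
    pat201 ((shareMap n)^[t] T) (i - (t : ZMod n)) := by
  induction t with
  | zero => simpa using h
  | succ t ih =>
    have := moveL hm hTper hTbal t (i - (t : ZMod n)) ih
    rwa [show i - ((t+1 : ℕ) : ZMod n) = i - (t : ZMod n) - 1 by push_cast; ring]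

lemma not_both (hm : 1 ≤ m) (hTper : (shareMap n)^[m] T = T) (hTbal : IsBalanced n T)
    {q p : ZMod n} (hq : pat102 T q) (hp : pat201 T p) : False := by
  set e : ZMod n := p - q with he
  rcases Nat.even_or_odd e.val with hev | hod
  · -- 2t = e
    obtain ⟨u, hu⟩ := hev
    set t : ℕ := u with ht
    have h2t : ((2 * t : ℕ) : ZMod n) = e := by
      rw [show 2 * t = e.val by omega]
      exact valcast e
    have hpos : p - (t : ZMod n) = q + (t : ZMod n) := by
      have : (2 : ZMod n) * (t : ZMod n) = p - q := by
        rw [← he, ← h2t]; push_cast; ring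
      linear_combination -this
    have hA := moveR_iter hm hTper hTbal q hq t
    have hB := moveL_iter hm hTper hTbal p hp t
    rw [hpos] at hB
    have := hA.2.2
    have := hB.2.2
    omega
  · -- 2t + 1 = e
    obtain ⟨u, hu⟩ := hod
    set t : ℕ := u with ht
    have h2t : ((2 * t + 1 : ℕ) : ZMod n) = e := by
      rw [show 2 * t + 1 = e.val by omega]
      exact valcast e
    have hpos : p - (t : ZMod n) = q + (t : ZMod n) + 1 := by
      have : (2 : ZMod n) * (t : ZMod n) + 1 = p - q := by
        rw [← he, ← h2t]; push_cast; ring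
      linear_combination -this
    have hA := moveR_iter hm hTper hTbal q hq t
    have hB := moveL_iter hm hTper hTbal p hp t
    rw [hpos] at hB
    have h1 := hA.2.1
    have h2 := hB.1
    rw [add_sub_cancel_right] at h2
    omega

lemma orientation (hm : 1 ≤ m) (hTper : (shareMap n)^[m] T = T) (hTbal : IsBalanced n T) :
    (∀ i, T i = 0 → T (i+1) = 2) ∨ (∀ i, T i = 0 → T (i-1) = 2) := by
  have h0 : (shareMap n)^[0] T = T := rfl
  have hle : ∀ i, T i ≤ 2 := by
    have := orbit_le_two hm hTper hTbal 0
    rwa [h0] at this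
  have hL : ∀ i, T i = 0 → 2 ≤ T (i-1) ∨ 2 ≤ T (i+1) := by
    have := orbit_L hm hTper hTbal 0
    rwa [h0] at this
  have hno00 : ∀ i, ¬(T i = 0 ∧ T (i+1) = 0) := by
    have := orbit_no00 hm hTper hTbal 0
    rwa [h0] at this
  by_contra hcon
  push_neg at hcon
  obtain ⟨⟨p, hp0, hp1⟩, ⟨q, hq0, hq1⟩⟩ := hcon
  -- build pat201 at p
  have hp2 : T (p+1) = 1 := by
    have := hno00 p
    have := hle (p+1)
    rcases hL p hp0 with h | h
    · omega
    · have := hle (p+1); omega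
  have hpm : T (p-1) = 2 := by
    rcases hL p hp0 with h | h
    · have := hle (p-1); omega
    · omega
  -- build pat102 at q
  have hq2 : T (q-1) = 1 := by
    have h00 := hno00 (q-1)
    rw [sub_add_cancel] at h00
    have := hle (q-1)
    omega
  have hqp : T (q+1) = 2 := by
    rcases hL q hq0 with h | h
    · omega
    · have := hle (q+1); omega
  exact not_both hm hTper hTbal (q := q) (p := p) ⟨hq2, hq0, hqp⟩ ⟨hpm, hp0, hp2⟩

end Orbit
end CandyAux


namespace CandyAux
variable {n : ℕ} [NeZero n]

lemma share_reflect (S : ZMod n → ℕ) (c : ZMod n) (i : ZMod n) :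
    shareMap n (fun x => S (c - x)) i = shareMap n S (c - i) := by
  simp only [shareMap_apply]
  rw [show c - (i - 1) = (c - i) + 1 by ring, show c - (i + 1) = (c - i) - 1 by ring]
  omega

lemma iterate_reflect (S : ZMod n → ℕ) (c : ZMod n) (k : ℕ) :
    (shareMap n)^[k] (fun x => S (c - x)) = fun i => ((shareMap n)^[k] S) (c - i) := by
  induction k with
  | zero => rfl
  | succ k ih =>
    rw [Function.iterate_succ_apply', Function.iterate_succ_apply', ih]
    funext i
    exact share_reflect ((shareMap n)^[k] S) c i

lemma symm_transfer {S T : ZMod n → ℕ} {c : ZMod n} (hsym : ∀ i, S (c - i) = S i)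
    {k : ℕ} (hT : T = (shareMap n)^[k] S) : ∀ i, T (c - i) = T i := by
  intro i
  have hfun : (fun x => S (c - x)) = S := funext hsym
  have := congrFun (iterate_reflect S c k) i
  rw [hfun, ← hT] at this
  exact this.symm

section Statics
variable {T : ZMod n → ℕ}

lemma two_nbrs (hbalT : IsBalanced n T) (hle : ∀ i, T i ≤ 2)
    (K : ∀ p, T p = 0 → T (p+1) = 2 ∧ T (p-1) = 2) :
    ∀ w, T w = 2 → T (w-1) = 0 ∧ T (w+1) = 0 := by
  classical
  set Z0 := Finset.univ.filter (fun i : ZMod n => T i = 0) with hZ0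
  set Z2 := Finset.univ.filter (fun i : ZMod n => T i = 2) with hZ2
  have hc : Z0.card = Z2.card := cnt0_eq_cnt2 hbalT hle
  have himg1 : Z0.image (· + 1) = Z2 := by
    apply Finset.eq_of_subset_of_card_le
    · intro w hw
      obtain ⟨p, hp, rfl⟩ := Finset.mem_image.mp hw
      simp only [hZ0, Finset.mem_filter, Finset.mem_univ, true_and] at hp
      simp only [hZ2, Finset.mem_filter, Finset.mem_univ, true_and]
      exact (K p hp).1
    · rw [Finset.card_image_of_injective _ (add_left_injective 1), hc]
  have himg2 : Z0.image (· - 1) = Z2 := by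
    apply Finset.eq_of_subset_of_card_le
    · intro w hw
      obtain ⟨p, hp, rfl⟩ := Finset.mem_image.mp hw
      simp only [hZ0, Finset.mem_filter, Finset.mem_univ, true_and] at hp
      simp only [hZ2, Finset.mem_filter, Finset.mem_univ, true_and]
      exact (K p hp).2
    · rw [Finset.card_image_of_injective _ (sub_left_injective), hc]
  intro w hw
  have hwZ : w ∈ Z2 := by
    simp only [hZ2, Finset.mem_filter, Finset.mem_univ, true_and]; exact hw
  constructor
  · rw [← himg1] at hwZ
    obtain ⟨p, hp, hpw⟩ := Finset.mem_image.mp hwZ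
    simp only [hZ0, Finset.mem_filter, Finset.mem_univ, true_and] at hp
    rw [← hpw, add_sub_cancel_right]
    exact hp
  · rw [← himg2] at hwZ
    obtain ⟨p, hp, hpw⟩ := Finset.mem_image.mp hwZ
    simp only [hZ0, Finset.mem_filter, Finset.mem_univ, true_and] at hp
    rw [← hpw, sub_add_cancel]
    exact hp

lemma alt_struct (hbalT : IsBalanced n T) (hle : ∀ i, T i ≤ 2)
    (K : ∀ p, T p = 0 → T (p+1) = 2 ∧ T (p-1) = 2)
    {p : ZMod n} (hz : T p = 0) :
    ∀ j : ℕ, T (p + 2*(j:ZMod n)) = 0 ∧ T (p + 2*(j:ZMod n) + 1) = 2 := by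
  have h2n := two_nbrs hbalT hle K
  intro j
  induction j with
  | zero =>
    constructor
    · simpa using hz
    · have := (K p hz).1
      simpa using this
  | succ j ih =>
    obtain ⟨ih0, ih1⟩ := ih
    have hx : T (p + 2*(j:ZMod n) + 1 + 1) = 0 := (h2n _ ih1).2
    have e1 : p + 2*((j+1 : ℕ):ZMod n) = p + 2*(j:ZMod n) + 1 + 1 := by push_cast; ring
    refine ⟨by rw [e1]; exact hx, ?_⟩
    have := (K _ hx).1
    rw [e1]
    exact this

end Statics

section ClassifyMain
variable {T : ZMod n → ℕ} {m : ℕ}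

theorem classify (hm : 1 ≤ m) (hTper : (shareMap n)^[m] T = T) (hTbal : IsBalanced n T)
    (hsymT : ∃ c, ∀ i, T (c - i) = T i) :
    (∀ i, T i = 1) ∨
      ∃ a, ∀ j : ℕ, T (a + 2*(j:ZMod n)) = 0 ∧ T (a + 2*(j:ZMod n) + 1) = 2 := by
  obtain ⟨c, hsym⟩ := hsymT
  have hle : ∀ i, T i ≤ 2 := by
    have := orbit_le_two hm hTper hTbal 0
    rwa [show (shareMap n)^[0] T = T from rfl] at this
  have K : ∀ p, T p = 0 → T (p+1) = 2 ∧ T (p-1) = 2 := by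
    rcases orientation hm hTper hTbal with hor | hor
    · intro p hp
      refine ⟨hor p hp, ?_⟩
      have hcp : T (c - p) = 0 := by rw [hsym p]; exact hp
      have := hor (c - p) hcp
      rw [show c - p + 1 = c - (p - 1) by ring, hsym (p-1)] at this
      exact this
    · intro p hp
      refine ⟨?_, hor p hp⟩
      have hcp : T (c - p) = 0 := by rw [hsym p]; exact hp
      have := hor (c - p) hcp
      rw [show c - p - 1 = c - (p + 1) by ring, hsym (p+1)] at this
      exact this
  by_cases hex : ∃ p, T p = 0
  · obtain ⟨p, hp⟩ := hex
    exact Or.inr ⟨p, alt_struct hTbal hle K hp⟩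
  · push_neg at hex
    left
    have hz0 : cnt T 0 = 0 := by
      unfold cnt
      rw [Finset.card_eq_zero, Finset.filter_eq_empty_iff]
      intro i _
      exact hex i
    have hz2 : cnt T 2 = 0 := by rw [← cnt0_eq_cnt2 hTbal hle]; exact hz0
    intro i
    have hne2 : T i ≠ 2 := by
      intro h2
      have hmem : i ∈ Finset.univ.filter (fun i : ZMod n => T i = 2) :=
        Finset.mem_filter.mpr ⟨Finset.mem_univ i, h2⟩
      unfold cnt at hz2
      rw [Finset.card_eq_zero] at hz2
      rw [hz2] at hmem
      exact absurd hmem (Finset.notMem_empty i)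
    have := hle i
    have := hex i
    omega

end ClassifyMain
end CandyAux


namespace CandyAux
variable {n : ℕ} [NeZero n]

lemma share_cast_zmod (S : ZMod n → ℕ) (i : ZMod n) :
    ((shareMap n S i : ℕ) : ZMod n) = (S i : ZMod n) - 2 * ((aI S i : ℤ) : ZMod n)
      + ((aI S (i-1) : ℤ) : ZMod n) + ((aI S (i+1) : ℤ) : ZMod n) := by
  have h := congrArg (fun z : ℤ => ((z : ℤ) : ZMod n)) (shareMap_cast S i)
  push_cast at h
  push_cast
  exact h

lemma sig_share (S : ZMod n → ℕ) :
    ∑ i : ZMod n, i * ((shareMap n S i : ℕ) : ZMod n)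
      = ∑ i : ZMod n, i * ((S i : ℕ) : ZMod n) := by
  have hpt : ∀ i : ZMod n, i * ((shareMap n S i : ℕ) : ZMod n)
      = i * (S i : ZMod n) - 2 * (i * ((aI S i : ℤ) : ZMod n))
        + i * ((aI S (i-1) : ℤ) : ZMod n) + i * ((aI S (i+1) : ℤ) : ZMod n) := by
    intro i
    rw [share_cast_zmod]
    ring
  rw [Finset.sum_congr rfl fun i _ => hpt i]
  rw [Finset.sum_add_distrib, Finset.sum_add_distrib, Finset.sum_sub_distrib]
  have hsh1 : ∑ i : ZMod n, i * ((aI S (i-1) : ℤ) : ZMod n)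
      = ∑ i : ZMod n, (i+1) * ((aI S i : ℤ) : ZMod n) := by
    exact (sum_shift (fun i => i * ((aI S (i-1) : ℤ) : ZMod n)) 1).symm.trans
      (Finset.sum_congr rfl fun i _ => by rw [add_sub_cancel_right])
  have hsh2 : ∑ i : ZMod n, i * ((aI S (i+1) : ℤ) : ZMod n)
      = ∑ i : ZMod n, (i-1) * ((aI S i : ℤ) : ZMod n) := by
    exact (sum_shift_sub (fun i => i * ((aI S (i+1) : ℤ) : ZMod n)) 1).symm.trans
      (Finset.sum_congr rfl fun i _ => by rw [sub_add_cancel])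
  rw [hsh1, hsh2]
  have hmul : ∑ i : ZMod n, 2 * (i * ((aI S i : ℤ) : ZMod n))
      = 2 * ∑ i : ZMod n, i * ((aI S i : ℤ) : ZMod n) := by rw [← Finset.mul_sum]
  rw [hmul]
  have hcomb : ∑ i : ZMod n, (i+1) * ((aI S i : ℤ) : ZMod n)
      + ∑ i : ZMod n, (i-1) * ((aI S i : ℤ) : ZMod n)
      = 2 * ∑ i : ZMod n, i * ((aI S i : ℤ) : ZMod n) := by
    rw [← Finset.sum_add_distrib, Finset.mul_sum]
    exact Finset.sum_congr rfl fun i _ => by ring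
  linear_combination hcomb

lemma tau_share (S : ZMod n → ℕ) : tauInv n (shareMap n S) = tauInv n S := by
  unfold tauInv
  congr 1
  have hrw : ∀ (U : ZMod n → ℕ), ∑ i : ZMod n, ((i.val : ℕ) : ZMod n) * (U i : ZMod n)
      = ∑ i : ZMod n, i * (U i : ZMod n) :=
    fun U => Finset.sum_congr rfl fun i _ => by rw [valcast]
  rw [hrw, hrw]
  exact sig_share S

lemma tau_iter (S : ZMod n → ℕ) (k : ℕ) : tauInv n ((shareMap n)^[k] S) = tauInv n S := by
  induction k with
  | zero => rfl
  | succ k ih => rw [Function.iterate_succ_apply', tau_share, ih]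

lemma tau_eq_sig (hev : Even n) (S : ZMod n → ℕ) :
    tauInv n S = ((n/2 : ℕ) : ZMod n) + ∑ i : ZMod n, i * (S i : ZMod n) := by
  unfold tauInv
  rw [if_pos hev]
  congr 1
  exact Finset.sum_congr rfl fun i _ => by rw [valcast]

lemma sum_univ_id (hev : Even n) :
    ∑ i : ZMod n, i = - (((n/2 : ℕ) : ZMod n)) := by
  obtain ⟨m, hm⟩ := hev
  have h1 : 1 ≤ n := Nat.one_le_iff_ne_zero.mpr (NeZero.ne n)
  have hm1 : 1 ≤ m := by omega
  have hs : (∑ j ∈ Finset.range n, j) * 2 = (m * (n - 1)) * 2 := by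
    rw [Finset.sum_range_id_mul_two]
    rw [show n * (n-1) = (m * (n-1)) * 2 by rw [hm]; ring]
  have hs2 : ∑ j ∈ Finset.range n, j = m * (n - 1) := Nat.eq_of_mul_eq_mul_right (by norm_num) hs
  have hcast : ∑ i : ZMod n, i = ((∑ j ∈ Finset.range n, j : ℕ) : ZMod n) := by
    rw [sum_univ_eq_range (fun i : ZMod n => i)]
    push_cast
    rfl
  rw [hcast, hs2, Nat.cast_mul, Nat.cast_sub h1, ZMod.natCast_self]
  rw [show n / 2 = m by omega]
  ring

lemma tau_ones (hev : Even n) {T : ZMod n → ℕ} (hone : ∀ i, T i = 1) :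
    tauInv n T = 0 := by
  rw [tau_eq_sig hev]
  have : ∑ i : ZMod n, i * (T i : ZMod n) = ∑ i : ZMod n, i := by
    apply Finset.sum_congr rfl
    intro i _
    rw [hone i]
    push_cast
    ring
  rw [this, sum_univ_id hev]
  ring

lemma sum_range_double {M : Type*} [AddCommMonoid M] (G : ℕ → M) (m : ℕ) :
    ∑ j ∈ Finset.range (2*m), G j = ∑ j ∈ Finset.range m, (G (2*j) + G (2*j+1)) := by
  induction m with
  | zero => simp
  | succ m ih =>
    rw [show 2*(m+1) = (2*m+1)+1 by ring, Finset.sum_range_succ, Finset.sum_range_succ,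
      Finset.sum_range_succ, ih, add_assoc]

lemma tau_alt (hn : 4 ≤ n) (hev : Even n) {T : ZMod n → ℕ} {a : ZMod n}
    (hAlt : ∀ j : ℕ, T (a + 2*(j:ZMod n)) = 0 ∧ T (a + 2*(j:ZMod n) + 1) = 2) :
    tauInv n T = ((n/2 : ℕ) : ZMod n) := by
  obtain ⟨m, hm⟩ := hev
  have hm2 : 2 ≤ m := by omega
  have h2m : n = 2 * m := by omega
  set F : ZMod n → ZMod n := fun i => i * (T i : ZMod n) with hF
  have step1 : ∑ i : ZMod n, F i = ∑ i : ZMod n, F (a + i) :=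
    (Fintype.sum_equiv (Equiv.addLeft a) (fun i => F (a + i)) F (fun i => rfl)).symm
  have step2 : ∑ i : ZMod n, F (a + i) = ∑ j ∈ Finset.range n, F (a + (j : ZMod n)) :=
    sum_univ_eq_range (fun i => F (a + i))
  have step3 : ∑ j ∈ Finset.range n, F (a + (j : ZMod n))
      = ∑ j ∈ Finset.range m, (F (a + ((2*j : ℕ) : ZMod n)) + F (a + ((2*j+1 : ℕ) : ZMod n))) := by
    rw [show Finset.range n = Finset.range (2*m) by rw [← h2m]]
    exact sum_range_double (fun j => F (a + (j : ZMod n))) m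
  have step4 : ∀ j : ℕ, F (a + ((2*j : ℕ) : ZMod n)) + F (a + ((2*j+1 : ℕ) : ZMod n))
      = (a + 2*(j : ZMod n) + 1) * 2 := by
    intro j
    have h0 := (hAlt j).1
    have h2 := (hAlt j).2
    have e0 : a + ((2*j : ℕ) : ZMod n) = a + 2*(j:ZMod n) := by push_cast; ring
    have e1 : a + ((2*j+1 : ℕ) : ZMod n) = a + 2*(j:ZMod n) + 1 := by push_cast; ring
    rw [hF]
    simp only [e0, e1, h0, h2]
    push_cast
    ring
  have hzero : ∑ i : ZMod n, F i = 0 := by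
    rw [step1, step2, step3, Finset.sum_congr rfl fun j _ => step4 j]
    have hexp : ∀ j : ℕ, (a + 2*(j : ZMod n) + 1) * 2
        = (2*a + 2) + 4 * (j : ZMod n) := fun j => by ring
    rw [Finset.sum_congr rfl fun j _ => hexp j, Finset.sum_add_distrib,
      Finset.sum_const, Finset.card_range, ← Finset.mul_sum]
    have hcs : ∑ j ∈ Finset.range m, ((j : ℕ) : ZMod n)
        = ((∑ j ∈ Finset.range m, j : ℕ) : ZMod n) := by push_cast; rfl
    have hsn : ((∑ j ∈ Finset.range m, j : ℕ) : ZMod n) * 2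
        = ((m : ℕ) : ZMod n) * (((m - 1 : ℕ)) : ZMod n) := by
      rw [show ((m : ℕ) : ZMod n) * (((m - 1 : ℕ)) : ZMod n) = ((m * (m-1) : ℕ) : ZMod n) by
        push_cast; ring]
      rw [show ((∑ j ∈ Finset.range m, j : ℕ) : ZMod n) * 2
          = (((∑ j ∈ Finset.range m, j) * 2 : ℕ) : ZMod n) by push_cast; ring]
      rw [Finset.sum_range_id_mul_two]
    have hM : (2 : ZMod n) * ((m : ℕ) : ZMod n) = 0 := by
      rw [show (2 : ZMod n) * ((m : ℕ) : ZMod n) = ((2 * m : ℕ) : ZMod n) by push_cast; ring]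
      rw [← h2m, ZMod.natCast_self]
    have hm1cast : (((m - 1 : ℕ)) : ZMod n) = ((m : ℕ) : ZMod n) - 1 := by
      rw [Nat.cast_sub (by omega)]
      push_cast
      ring
    rw [hcs, nsmul_eq_mul]
    rw [show (4 : ZMod n) * ((∑ j ∈ Finset.range m, j : ℕ) : ZMod n)
        = 2 * (((∑ j ∈ Finset.range m, j : ℕ) : ZMod n) * 2) by ring]
    rw [hsn, hm1cast]
    linear_combination (a + ((m:ℕ) : ZMod n)) * hM
  rw [tau_eq_sig ⟨m, hm⟩]
  rw [hF] at hzero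
  rw [hzero]
  ring

lemma val_half (hn : 4 ≤ n) : ((n/2 : ℕ) : ZMod n).val = n / 2 := by
  rw [ZMod.val_natCast, Nat.mod_eq_of_lt (by omega)]

end CandyAux

/-- Symmetric distributions with an even number of children: the representative of τ is
0 or n/2, and the eventual periodic state is accordingly the all-ones state or the
alternating 0,2 state up to rotation. -/
theorem symmetric_even_outcome (n : ℕ) (hn : 4 ≤ n) (hev : Even n) [NeZero n]
    (S : ZMod n → ℕ) (hbal : IsBalanced n S)
    (hsym : ∃ c : ZMod n, ∀ i : ZMod n, S (c - i) = S i)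
    (k : ℕ) (T : ZMod n → ℕ) (hT : T = (shareMap n)^[k] S)
    (hper : IsPeriodicState n T) :
    ((tauInv n S).val = 0 ∨ (tauInv n S).val = n / 2) ∧
      (tauInv n S = 0 → ∀ i : ZMod n, T i = 1) ∧
      ((tauInv n S).val = n / 2 →
        ∃ a : ZMod n, ∀ j : ℕ, j < n / 2 →
          T (a + 2 * (j : ZMod n)) = 0 ∧ T (a + 2 * (j : ZMod n) + 1) = 2) := by
  classical
  obtain ⟨m, hm, hTper⟩ := hper
  have hbalT : IsBalanced n T := by rw [hT]; exact CandyAux.balanced_iterate hbal k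
  obtain ⟨c, hsymS⟩ := hsym
  have hsymT : ∃ c : ZMod n, ∀ i, T (c - i) = T i := ⟨c, CandyAux.symm_transfer hsymS hT⟩
  have htauST : tauInv n S = tauInv n T := by rw [hT, CandyAux.tau_iter]
  have hvhalf : ((n/2 : ℕ) : ZMod n).val = n / 2 := CandyAux.val_half hn
  rcases CandyAux.classify hm hTper hbalT hsymT with hones | ⟨a, hAlt⟩
  · have htau : tauInv n S = 0 := by rw [htauST]; exact CandyAux.tau_ones hev hones
    refine ⟨Or.inl (by rw [htau, ZMod.val_zero]), fun _ => hones, ?_⟩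
    intro hval
    rw [htau, ZMod.val_zero] at hval
    exfalso
    omega
  · have htau : tauInv n S = ((n/2 : ℕ) : ZMod n) := by
      rw [htauST]; exact CandyAux.tau_alt hn hev hAlt
    refine ⟨Or.inr (by rw [htau, hvhalf]), ?_, ?_⟩
    · intro h0
      rw [htau] at h0
      exfalso
      have hv := congrArg ZMod.val h0
      rw [hvhalf, ZMod.val_zero] at hv
      omega
    · intro _
      exact ⟨a, fun j _ => ⟨(hAlt j).1, (hAlt j).2⟩⟩
end

section
/- Monopoly states: fix a ∈ ZMod n and let M be the monopoly state with M a = n and M i = 0 for i ≠ a, and suppose f^[k] M is periodic for some k. Then there exists m with f^[m] M i = 1 for all i ∈ ZMod n if and only if n is odd. -/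
namespace Candy

variable {n : ℕ}

/-- integer firing indicator -/
def chi (S : ZMod n → ℕ) (v : ZMod n) : ℤ := if 2 ≤ S v then 1 else 0

lemma chi_nonneg (S : ZMod n → ℕ) (v : ZMod n) : 0 ≤ chi S v := by
  unfold chi; split <;> norm_num

lemma chi_le_one (S : ZMod n → ℕ) (v : ZMod n) : chi S v ≤ 1 := by
  unfold chi; split <;> norm_num

lemma shareMap_cast (S : ZMod n → ℕ) (v : ZMod n) :
    ((shareMap n S v : ℤ)) = (S v : ℤ) - 2 * chi S v + chi S (v - 1) + chi S (v + 1) := by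
  unfold shareMap chi
  have h0 : (0:ℤ) ≤ (S v : ℤ) := by positivity
  split_ifs <;> push_cast <;> omega

/-- summing a function over `ZMod n` via `range n`. -/
lemma sum_univ_eq {M : Type*} [AddCommMonoid M] [NeZero n] (g : ZMod n → M) :
    ∑ j ∈ Finset.range n, g ((j : ℕ) : ZMod n) = ∑ v : ZMod n, g v := by
  apply Finset.sum_nbij' (fun j => ((j : ℕ) : ZMod n)) (fun v => v.val)
  · intro a ha; exact Finset.mem_univ _
  · intro v _; exact Finset.mem_range.mpr (ZMod.val_lt v)
  · intro j hj; simp only [Finset.mem_range] at hj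
    exact ZMod.val_cast_of_lt hj
  · intro v _; exact ZMod.natCast_rightInverse v
  · intro j hj; rfl

lemma sum_shift {M : Type*} [AddCommMonoid M] [NeZero n] (g : ZMod n → M) (c : ZMod n) :
    ∑ v : ZMod n, g (v + c) = ∑ v : ZMod n, g v :=
  Fintype.sum_equiv (Equiv.addRight c) _ _ (fun v => rfl)

lemma sum_shareMap [NeZero n] (S : ZMod n → ℕ) :
    ∑ v : ZMod n, shareMap n S v = ∑ v : ZMod n, S v := by
  have : ∑ v : ZMod n, ((shareMap n S v : ℤ)) = ∑ v : ZMod n, (S v : ℤ) := by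
    simp only [shareMap_cast]
    rw [Finset.sum_add_distrib, Finset.sum_add_distrib, Finset.sum_sub_distrib]
    have h1 : ∑ v : ZMod n, chi S (v - 1) = ∑ v : ZMod n, chi S v := by
      simpa [sub_eq_add_neg] using sum_shift (chi S) (-1)
    have h2 : ∑ v : ZMod n, chi S (v + 1) = ∑ v : ZMod n, chi S v := sum_shift (chi S) 1
    rw [h1, h2, ← Finset.mul_sum]
    ring
  exact_mod_cast this


/-- the mod-n invariant -/
def Tm [NeZero n] (S : ZMod n → ℕ) : ZMod n := ∑ v : ZMod n, v * (S v : ZMod n)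

def chiz [NeZero n] (S : ZMod n → ℕ) (v : ZMod n) : ZMod n := if 2 ≤ S v then 1 else 0

lemma cast_chi [NeZero n] (S : ZMod n → ℕ) (v : ZMod n) :
    ((chi S v : ℤ) : ZMod n) = chiz S v := by
  unfold chi chiz; split <;> simp

lemma shareMap_cast_zmod [NeZero n] (S : ZMod n → ℕ) (v : ZMod n) :
    ((shareMap n S v : ℕ) : ZMod n)
      = (S v : ZMod n) - 2 * chiz S v + chiz S (v - 1) + chiz S (v + 1) := by
  have := congrArg (fun z : ℤ => (z : ZMod n)) (shareMap_cast S v)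
  simpa [cast_chi] using this

lemma Tm_shareMap [NeZero n] (S : ZMod n → ℕ) : Tm (shareMap n S) = Tm S := by
  unfold Tm
  have : ∀ v : ZMod n, v * ((shareMap n S v : ℕ) : ZMod n)
      = v * (S v : ZMod n) - 2 * (v * chiz S v) + v * chiz S (v - 1) + v * chiz S (v + 1) := by
    intro v; rw [shareMap_cast_zmod]; ring
  simp only [this]
  rw [Finset.sum_add_distrib, Finset.sum_add_distrib, Finset.sum_sub_distrib, ← Finset.mul_sum]
  have h1 : ∑ v : ZMod n, v * chiz S (v - 1) = ∑ v : ZMod n, (v + 1) * chiz S v := by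
    have := sum_shift (n := n) (fun w => (w + 1) * chiz S w) (-1)
    simp only [neg_add_cancel_right] at this
    rw [← this]; apply Finset.sum_congr rfl; intro v _
    rw [sub_eq_add_neg]
  have h2 : ∑ v : ZMod n, v * chiz S (v + 1) = ∑ v : ZMod n, (v - 1) * chiz S v := by
    have := sum_shift (n := n) (fun w => (w - 1) * chiz S w) 1
    simp only [add_sub_cancel_right] at this
    rw [← this]
  rw [h1, h2]
  have : ∑ v : ZMod n, (v + 1) * chiz S v + ∑ v : ZMod n, (v - 1) * chiz S v
      = 2 * ∑ v : ZMod n, v * chiz S v := by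
    rw [Finset.mul_sum, ← Finset.sum_add_distrib]
    apply Finset.sum_congr rfl; intro v _; ring
  rw [add_assoc, this]; ring

lemma Tm_iterate [NeZero n] (S : ZMod n → ℕ) (m : ℕ) : Tm ((shareMap n)^[m] S) = Tm S := by
  induction m with
  | zero => rfl
  | succ m ih => rw [Function.iterate_succ_apply', Tm_shareMap, ih]

lemma sum_iterate [NeZero n] (S : ZMod n → ℕ) (m : ℕ) :
    ∑ v : ZMod n, (shareMap n)^[m] S v = ∑ v : ZMod n, S v := by
  induction m with
  | zero => rfl
  | succ m ih => rw [Function.iterate_succ_apply', sum_shareMap, ih]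

lemma Tm_ones [NeZero n] : Tm (n := n) (fun _ => 1) = ((n * (n-1) / 2 : ℕ) : ZMod n) := by
  unfold Tm
  simp only [Nat.cast_one, mul_one]
  rw [← sum_univ_eq (n := n) (fun v => v)]
  have : ∑ j ∈ Finset.range n, ((j : ℕ) : ZMod n) = ((∑ j ∈ Finset.range n, j : ℕ) : ZMod n) := by
    push_cast; rfl
  rw [this, Finset.sum_range_id]

lemma Tm_monopoly [NeZero n] (a : ZMod n) (M : ZMod n → ℕ) (hMa : M a = n)
    (hM0 : ∀ i : ZMod n, i ≠ a → M i = 0) : Tm M = 0 := by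
  unfold Tm
  rw [Finset.sum_eq_single a]
  · rw [hMa, ZMod.natCast_self, mul_zero]
  · intro i _ hi; rw [hM0 i hi]; simp
  · intro h; exact absurd (Finset.mem_univ a) h

lemma even_no_ones (hn : 3 ≤ n) (hne : Even n) (a : ZMod n) (M : ZMod n → ℕ)
    (hMa : M a = n) (hM0 : ∀ i : ZMod n, i ≠ a → M i = 0) (m : ℕ)
    (hones : ∀ i : ZMod n, (shareMap n)^[m] M i = 1) : False := by
  haveI : NeZero n := ⟨by omega⟩
  have h1 : Tm ((shareMap n)^[m] M) = 0 := by rw [Tm_iterate, Tm_monopoly a M hMa hM0]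
  have h2 : (shareMap n)^[m] M = fun _ => 1 := funext fun i => hones i
  rw [h2, Tm_ones] at h1
  rw [ZMod.natCast_eq_zero_iff] at h1
  obtain ⟨l, rfl⟩ := hne
  have hl : 2 ≤ l := by omega
  have e1 : (l + l) * (l + l - 1) / 2 = l * (l + l - 1) := by
    have : (l + l) * (l + l - 1) = 2 * (l * (l + l - 1)) := by ring
    omega
  rw [e1] at h1
  have e2 : l * (l + l - 1) + l = l * (l + l) := by
    rw [← Nat.mul_succ]; congr 1; omega
  have hdvd2 : (l + l) ∣ l * (l + l) := ⟨l, by ring⟩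
  have hdvdl : (l + l) ∣ l := (Nat.dvd_add_right h1).mp (e2 ▸ hdvd2)
  have := Nat.le_of_dvd (by omega) hdvdl
  omega


section Odd

lemma const_of_step [NeZero n] {α : Type*} (g : ZMod n → α) (h : ∀ v, g (v + 1) = g v) :
    ∀ v w : ZMod n, g v = g w := by
  have key : ∀ (j : ℕ) (v : ZMod n), g (v + (j : ZMod n)) = g v := by
    intro j
    induction j with
    | zero => intro v; simp
    | succ j ih =>
        intro v
        have : ((j + 1 : ℕ) : ZMod n) = (j : ZMod n) + 1 := by push_cast; ring
        rw [this, ← add_assoc, h, ih]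
  intro v w
  have : w + (((v - w).val : ℕ) : ZMod n) = v := by
    rw [ZMod.natCast_rightInverse]; ring
  rw [← this, key]

/-- A periodic, balanced, symmetric orbit of the sharing map. -/
structure Orbit (n : ℕ) [NeZero n] where
  p : ℕ
  hp : 1 ≤ p
  S : ℕ → ZMod n → ℕ
  hstep : ∀ t, S (t + 1) = shareMap n (S t)
  hper : ∀ t, S (t + p) = S t
  hsum : ∀ t, ∑ v : ZMod n, S t v = n
  a : ZMod n
  hsym : ∀ t v, S t (2 * a - v) = S t v

variable [NeZero n] (O : Orbit n)

/-- step identity, integer version -/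
lemma Orbit.stepz (t : ℕ) (v : ZMod n) :
    (O.S (t+1) v : ℤ) = (O.S t v : ℤ) - 2 * chi (O.S t) v + chi (O.S t) (v - 1)
      + chi (O.S t) (v + 1) := by
  rw [O.hstep t]; exact shareMap_cast _ v

/-- firing count over one period -/
def Orbit.c (v : ZMod n) : ℤ := ∑ t ∈ Finset.range O.p, chi (O.S t) v

lemma Orbit.c_nonneg (v : ZMod n) : 0 ≤ O.c v :=
  Finset.sum_nonneg fun t _ => chi_nonneg _ v

lemma Orbit.c_rel (v : ZMod n) : 2 * O.c v = O.c (v - 1) + O.c (v + 1) := by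
  classical
  have tel : ∑ t ∈ Finset.range O.p, ((O.S (t+1) v : ℤ) - (O.S t v : ℤ)) = 0 := by
    rw [Finset.sum_range_sub (f := fun t => (O.S t v : ℤ))]
    have := O.hper 0
    simp only [zero_add] at this
    rw [this]; ring
  have expand : ∑ t ∈ Finset.range O.p, ((O.S (t+1) v : ℤ) - (O.S t v : ℤ))
      = -2 * O.c v + O.c (v - 1) + O.c (v + 1) := by
    unfold Orbit.c
    rw [Finset.mul_sum, ← Finset.sum_add_distrib, ← Finset.sum_add_distrib]
    apply Finset.sum_congr rfl
    intro t _
    rw [O.stepz t v]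
    ring
  rw [expand] at tel
  linarith

lemma Orbit.c_const (v w : ZMod n) : O.c v = O.c w := by
  have hg : ∀ u : ZMod n, O.c (u + 1) - O.c u = O.c (u + 1 + 1) - O.c (u + 1) := by
    intro u
    have := O.c_rel (u + 1)
    have e : u + 1 - 1 = u := by ring
    rw [e] at this
    linarith
  have gconst : ∀ u w : ZMod n, O.c (u+1) - O.c u = O.c (w+1) - O.c w :=
    fun u w => const_of_step (fun u => O.c (u + 1) - O.c u) (fun u => (hg u).symm) u w
  -- the constant must be 0
  have sumg : ∑ u : ZMod n, (O.c (u + 1) - O.c u) = 0 := by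
    rw [Finset.sum_sub_distrib]
    rw [sum_shift (fun u => O.c u) 1]
    ring
  have sumg' : ∑ u : ZMod n, (O.c (u + 1) - O.c u) = (n : ℤ) * (O.c (0 + 1) - O.c 0) := by
    rw [Finset.sum_congr rfl (fun u _ => gconst u 0), Finset.sum_const]
    rw [Finset.card_univ, ZMod.card]
    push_cast [nsmul_eq_mul]; ring
  have hz : O.c (0 + 1) - O.c 0 = 0 := by
    have hn0 : (n : ℤ) ≠ 0 := by exact_mod_cast (NeZero.ne n)
    rw [sumg] at sumg'
    rcases mul_eq_zero.mp sumg'.symm with h | h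
    · exact absurd h hn0
    · exact h
  have step : ∀ u : ZMod n, O.c (u + 1) = O.c u := by
    intro u
    have := gconst u 0
    rw [hz] at this
    linarith
  exact const_of_step O.c step v w


lemma val_sub_one [NeZero n] (w : ZMod n) (hw : w ≠ 0) : (w - 1).val + 1 = w.val := by
  have h1 : 1 ≤ w.val := by
    rcases Nat.eq_zero_or_pos w.val with h | h
    · exact absurd ((ZMod.val_eq_zero w).mp h) hw
    · exact h
  have h2 : w.val < n := ZMod.val_lt w
  have e : w - 1 = ((w.val - 1 : ℕ) : ZMod n) := by
    have e2 : ((w.val : ℕ) : ZMod n) = w := ZMod.natCast_rightInverse w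
    rw [Nat.cast_sub h1, e2, Nat.cast_one]
  rw [e, ZMod.val_cast_of_lt (by omega)]
  omega

lemma val_neg_one [NeZero n] (hn : 2 ≤ n) : ((-1 : ZMod n)).val = n - 1 := by
  have h1 : ((n - 1 : ℕ) : ZMod n) = -1 := by
    rw [Nat.cast_sub (by omega), Nat.cast_one, ZMod.natCast_self, zero_sub]
  rw [← h1, ZMod.val_cast_of_lt (by omega)]

variable [NeZero n] (O : Orbit n)

/-- the height function -/
def Orbit.H (t : ℕ) (v : ZMod n) : ℤ :=
  (∑ j ∈ Finset.range ((v - O.a).val + 1), (O.S t (O.a + (j : ZMod n)) : ℤ))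
    - ((v - O.a).val + 1)

lemma Orbit.sumall (t : ℕ) :
    ∑ j ∈ Finset.range n, (O.S t (O.a + (j : ZMod n)) : ℤ) = n := by
  rw [sum_univ_eq (fun w => (O.S t (O.a + w) : ℤ))]
  have e1 : ∑ v : ZMod n, (O.S t (O.a + v) : ℤ) = ∑ v : ZMod n, (O.S t (v + O.a) : ℤ) :=
    Finset.sum_congr rfl fun v _ => by rw [add_comm]
  rw [e1, sum_shift (fun w => (O.S t w : ℤ)) O.a]
  rw [← Nat.cast_sum]
  exact_mod_cast congrArg (Nat.cast : ℕ → ℤ) (O.hsum t)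

lemma Orbit.Hstep (hn : 2 ≤ n) (t : ℕ) (v : ZMod n) :
    O.H t v = O.H t (v - 1) + (O.S t v : ℤ) - 1 := by
  by_cases hv : v = O.a
  · subst hv
    have e0 : O.a - O.a = 0 := sub_self _
    have e1 : O.H t O.a = (O.S t O.a : ℤ) - 1 := by
      unfold Orbit.H
      rw [e0, ZMod.val_zero, Finset.sum_range_one]
      simp
    have e2 : O.a - 1 - O.a = -1 := by ring
    have e3 : O.H t (O.a - 1) = 0 := by
      unfold Orbit.H
      rw [e2, val_neg_one hn]
      have : n - 1 + 1 = n := by omega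
      rw [this, O.sumall t]
      omega
    rw [e1, e3]; ring
  · have hw : v - O.a ≠ 0 := sub_ne_zero.mpr hv
    have hk : (v - 1 - O.a).val + 1 = (v - O.a).val := by
      have e : v - 1 - O.a = (v - O.a) - 1 := by ring
      rw [e]; exact val_sub_one _ hw
    have hfk : O.a + (((v - O.a).val : ℕ) : ZMod n) = v := by
      rw [ZMod.natCast_rightInverse]; ring
    unfold Orbit.H
    have hk2 : ((v - 1 - O.a).val : ℤ) + 1 = ((v - O.a).val : ℤ) := by exact_mod_cast hk
    rw [← hk, Finset.sum_range_succ, hk, hfk]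
    push_cast
    linarith

lemma Orbit.Hper (t : ℕ) (v : ZMod n) : O.H (t + O.p) v = O.H t v := by
  unfold Orbit.H
  rw [O.hper t]

/-- the constant in the height transition -/
def Orbit.C (t : ℕ) : ℤ :=
  O.H (t+1) O.a - O.H t O.a + chi (O.S t) O.a - chi (O.S t) (O.a + 1)

lemma Orbit.Htrans (hn : 2 ≤ n) (t : ℕ) (v : ZMod n) :
    O.H (t+1) v = O.H t v - chi (O.S t) v + chi (O.S t) (v + 1) + O.C t := by
  set g : ZMod n → ℤ := fun v => O.H (t+1) v - O.H t v + chi (O.S t) v - chi (O.S t) (v+1)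
    with hgdef
  have hg : ∀ v, g (v + 1) = g v := by
    intro v
    have e1 := O.Hstep hn (t+1) (v+1)
    have e2 := O.Hstep hn t (v+1)
    have e3 := O.stepz t (v+1)
    have c1 : v + 1 - 1 = v := by ring
    have c2 : v + 1 + 1 = v + 2 := by ring
    rw [c1] at e1 e2
    rw [c1, c2] at e3
    simp only [hgdef, c2]
    linarith
  have := const_of_step g hg v O.a
  simp only [hgdef] at this
  unfold Orbit.C
  linarith

lemma Orbit.Hmir (hn : 2 ≤ n) (t : ℕ) (v w : ZMod n) :
    O.H t v + O.H t (2 * O.a - 1 - v) = O.H t w + O.H t (2 * O.a - 1 - w) := by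
  set g : ZMod n → ℤ := fun v => O.H t v + O.H t (2 * O.a - 1 - v) with hgdef
  have hg : ∀ v, g (v + 1) = g v := by
    intro v
    have e1 := O.Hstep hn t (v + 1)
    have c1 : v + 1 - 1 = v := by ring
    rw [c1] at e1
    have e2 := O.Hstep hn t (2 * O.a - 1 - v)
    have c2 : 2 * O.a - 1 - v - 1 = 2 * O.a - 1 - (v + 1) := by ring
    rw [c2] at e2
    have c3 : 2 * O.a - 1 - v = 2 * O.a - (v + 1) := by ring
    have e3 : O.S t (2 * O.a - 1 - v) = O.S t (v + 1) := by
      rw [c3]; exact O.hsym t (v + 1)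
    rw [e3] at e2
    simp only [hgdef]
    linarith
  exact const_of_step g hg v w


def Orbit.Mx (t : ℕ) : ℤ := Finset.univ.sup' Finset.univ_nonempty (O.H t)
def Orbit.mn (t : ℕ) : ℤ := Finset.univ.inf' Finset.univ_nonempty (O.H t)

lemma Orbit.le_Mx (t : ℕ) (v : ZMod n) : O.H t v ≤ O.Mx t :=
  Finset.le_sup' _ (Finset.mem_univ v)

lemma Orbit.mn_le (t : ℕ) (v : ZMod n) : O.mn t ≤ O.H t v :=
  Finset.inf'_le _ (Finset.mem_univ v)

lemma Orbit.Mx_per (t : ℕ) : O.Mx (t + O.p) = O.Mx t :=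
  Finset.sup'_congr _ rfl (fun v _ => O.Hper t v)

lemma Orbit.mn_per (t : ℕ) : O.mn (t + O.p) = O.mn t :=
  Finset.inf'_congr _ rfl (fun v _ => O.Hper t v)

lemma Orbit.fire_step (hn : 2 ≤ n) (t : ℕ) (v : ZMod n) (h : 2 ≤ O.S t (v + 1)) :
    O.H t v + 1 ≤ O.H t (v + 1) := by
  have e := O.Hstep hn t (v + 1)
  have c1 : v + 1 - 1 = v := by ring
  rw [c1] at e
  have : (2 : ℤ) ≤ (O.S t (v+1) : ℤ) := by exact_mod_cast h
  linarith

lemma Orbit.Mx_succ_le (hn : 2 ≤ n) (t : ℕ) : O.Mx (t+1) ≤ O.Mx t + O.C t := by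
  apply Finset.sup'_le
  intro v _
  rw [O.Htrans hn t v]
  have h0 := chi_nonneg (O.S t) v
  by_cases h : 2 ≤ O.S t (v + 1)
  · have h1 := O.fire_step hn t v h
    have h2 : chi (O.S t) (v+1) = 1 := if_pos h
    have h3 := O.le_Mx t (v+1)
    linarith
  · have h2 : chi (O.S t) (v+1) = 0 := if_neg h
    have h3 := O.le_Mx t v
    linarith

lemma Orbit.mn_succ_ge (hn : 2 ≤ n) (t : ℕ) : O.mn t + O.C t ≤ O.mn (t+1) := by
  apply Finset.le_inf'
  intro v _
  rw [O.Htrans hn t v]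
  have h0 := chi_nonneg (O.S t) (v + 1)
  by_cases h : 2 ≤ O.S t v
  · have h1 : O.H t (v - 1) + 1 ≤ O.H t v := by
      have := O.fire_step hn t (v - 1) (by rwa [sub_add_cancel])
      rwa [sub_add_cancel] at this
    have h2 : chi (O.S t) v = 1 := if_pos h
    have h3 := O.mn_le t (v - 1)
    linarith
  · have h2 : chi (O.S t) v = 0 := if_neg h
    have h3 := O.mn_le t v
    linarith

def Orbit.osc (t : ℕ) : ℤ := O.Mx t - O.mn t

lemma Orbit.osc_succ_le (hn : 2 ≤ n) (t : ℕ) : O.osc (t+1) ≤ O.osc t := by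
  have := O.Mx_succ_le hn t
  have := O.mn_succ_ge hn t
  unfold Orbit.osc
  linarith

lemma Orbit.osc_mono (hn : 2 ≤ n) : ∀ s t : ℕ, s ≤ t → O.osc t ≤ O.osc s := by
  intro s t h
  induction t, h using Nat.le_induction with
  | base => exact le_refl _
  | succ t ht ih => exact le_trans (O.osc_succ_le hn t) ih

lemma Orbit.osc_const (hn : 2 ≤ n) (t : ℕ) : O.osc (t+1) = O.osc t := by
  have h1 := O.osc_succ_le hn t
  have h2 : O.osc (t + O.p) ≤ O.osc (t+1) := O.osc_mono hn _ _ (by have := O.hp; omega)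
  have h3 : O.osc (t + O.p) = O.osc t := by unfold Orbit.osc; rw [O.Mx_per, O.mn_per]
  linarith

lemma Orbit.Mx_succ (hn : 2 ≤ n) (t : ℕ) : O.Mx (t+1) = O.Mx t + O.C t := by
  have h1 := O.Mx_succ_le hn t
  have h2 := O.mn_succ_ge hn t
  have h3 := O.osc_const hn t
  unfold Orbit.osc at h3
  linarith

lemma Orbit.mn_succ (hn : 2 ≤ n) (t : ℕ) : O.mn (t+1) = O.mn t + O.C t := by
  have h1 := O.Mx_succ_le hn t
  have h2 := O.mn_succ_ge hn t
  have h3 := O.osc_const hn t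
  unfold Orbit.osc at h3
  linarith

def Orbit.MaxSet (t : ℕ) : Finset (ZMod n) :=
  Finset.univ.filter (fun v => O.H t v = O.Mx t)

lemma Orbit.mem_MaxSet {t : ℕ} {v : ZMod n} : v ∈ O.MaxSet t ↔ O.H t v = O.Mx t := by
  unfold Orbit.MaxSet
  simp

lemma Orbit.MaxSet_nonempty (t : ℕ) : (O.MaxSet t).Nonempty := by
  obtain ⟨v, _, hv⟩ := Finset.exists_mem_eq_sup' Finset.univ_nonempty (O.H t)
  exact ⟨v, O.mem_MaxSet.mpr hv.symm⟩

def Orbit.psi (t : ℕ) (v : ZMod n) : ZMod n := if 2 ≤ O.S t (v + 1) then v + 1 else v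

lemma Orbit.psi_cases (hn : 2 ≤ n) (t : ℕ) (v : ZMod n) (hv : v ∈ O.MaxSet (t+1)) :
    ¬ 2 ≤ O.S t v ∧
      ((¬ 2 ≤ O.S t (v+1) ∧ O.H t v = O.Mx t) ∨
        (2 ≤ O.S t (v+1) ∧ O.H t v = O.Mx t - 1 ∧ O.H t (v+1) = O.Mx t)) := by
  rw [Orbit.mem_MaxSet, O.Mx_succ hn t, O.Htrans hn t v] at hv
  have key : O.H t v - chi (O.S t) v + chi (O.S t) (v+1) = O.Mx t := by linarith
  have hMv := O.le_Mx t v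
  have hMv1 := O.le_Mx t (v+1)
  by_cases fv : 2 ≤ O.S t v
  · exfalso
    have h2 : chi (O.S t) v = 1 := if_pos fv
    by_cases fv1 : 2 ≤ O.S t (v+1)
    · have h3 : chi (O.S t) (v+1) = 1 := if_pos fv1
      have h4 := O.fire_step hn t v fv1
      have : O.H t v = O.Mx t := by linarith
      linarith
    · have h3 : chi (O.S t) (v+1) = 0 := if_neg fv1
      linarith
  · refine ⟨fv, ?_⟩
    have h2 : chi (O.S t) v = 0 := if_neg fv
    by_cases fv1 : 2 ≤ O.S t (v+1)
    · have h3 : chi (O.S t) (v+1) = 1 := if_pos fv1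
      have h4 := O.fire_step hn t v fv1
      exact Or.inr ⟨fv1, by linarith, by linarith⟩
    · have h3 : chi (O.S t) (v+1) = 0 := if_neg fv1
      exact Or.inl ⟨fv1, by linarith⟩

lemma Orbit.psi_mem (hn : 2 ≤ n) (t : ℕ) (v : ZMod n) (hv : v ∈ O.MaxSet (t+1)) :
    O.psi t v ∈ O.MaxSet t := by
  obtain ⟨_, hcase | hcase⟩ := O.psi_cases hn t v hv
  · rw [Orbit.psi, if_neg hcase.1]
    exact O.mem_MaxSet.mpr hcase.2
  · rw [Orbit.psi, if_pos hcase.1]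
    exact O.mem_MaxSet.mpr hcase.2.2

lemma Orbit.psi_injOn (hn : 2 ≤ n) (t : ℕ) :
    Set.InjOn (O.psi t) (O.MaxSet (t+1) : Set (ZMod n)) := by
  intro v hv w hw he
  simp only [Finset.coe_mem, Finset.mem_coe] at hv hw
  unfold Orbit.psi at he
  by_cases fv : 2 ≤ O.S t (v+1) <;> by_cases fw : 2 ≤ O.S t (w+1)
  · rw [if_pos fv, if_pos fw] at he
    exact add_right_cancel he
  · rw [if_pos fv, if_neg fw] at he
    exfalso
    obtain ⟨hw1, _⟩ := O.psi_cases hn t w hw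
    rw [← he] at hw1
    exact hw1 fv
  · rw [if_neg fv, if_pos fw] at he
    exfalso
    obtain ⟨hv1, _⟩ := O.psi_cases hn t v hv
    rw [he] at hv1
    exact hv1 fw
  · rwa [if_neg fv, if_neg fw] at he

lemma Orbit.MaxSet_card_le (hn : 2 ≤ n) (t : ℕ) :
    (O.MaxSet (t+1)).card ≤ (O.MaxSet t).card :=
  Finset.card_le_card_of_injOn (O.psi t) (fun v hv => O.psi_mem hn t v hv)
    (O.psi_injOn hn t)

lemma Orbit.MaxSet_per (t : ℕ) : O.MaxSet (t + O.p) = O.MaxSet t := by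
  unfold Orbit.MaxSet
  apply Finset.filter_congr
  intro v _
  rw [O.Hper t v, O.Mx_per t]

lemma Orbit.MaxSet_card_mono (hn : 2 ≤ n) : ∀ s t : ℕ, s ≤ t →
    (O.MaxSet t).card ≤ (O.MaxSet s).card := by
  intro s t h
  induction t, h using Nat.le_induction with
  | base => exact le_refl _
  | succ t ht ih => exact le_trans (O.MaxSet_card_le hn t) ih

lemma Orbit.MaxSet_card_const (hn : 2 ≤ n) (t : ℕ) :
    (O.MaxSet (t+1)).card = (O.MaxSet t).card := by
  have h1 := O.MaxSet_card_le hn t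
  have h2 : (O.MaxSet (t + O.p)).card ≤ (O.MaxSet (t+1)).card :=
    O.MaxSet_card_mono hn _ _ (by have := O.hp; omega)
  rw [O.MaxSet_per t] at h2
  omega

lemma Orbit.psi_image (hn : 2 ≤ n) (t : ℕ) :
    (O.MaxSet (t+1)).image (O.psi t) = O.MaxSet t := by
  apply Finset.eq_of_subset_of_card_le
  · intro x hx
    obtain ⟨v, hv, rfl⟩ := Finset.mem_image.mp hx
    exact O.psi_mem hn t v hv
  · rw [Finset.card_image_of_injOn (O.psi_injOn hn t), O.MaxSet_card_const hn t]

lemma Orbit.move (hn : 2 ≤ n) (t : ℕ) (x : ZMod n) (hx : x ∈ O.MaxSet t)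
    (hf : 2 ≤ O.S t x) : x - 1 ∈ O.MaxSet (t+1) := by
  have := O.psi_image hn t
  rw [← this] at hx
  obtain ⟨v, hv, hpsi⟩ := Finset.mem_image.mp hx
  obtain ⟨hnv, hcase | hcase⟩ := O.psi_cases hn t v hv
  · rw [Orbit.psi, if_neg hcase.1] at hpsi
    rw [hpsi] at hnv
    exact absurd hf hnv
  · rw [Orbit.psi, if_pos hcase.1] at hpsi
    have : v = x - 1 := by rw [← hpsi]; ring
    rwa [← this]

lemma Orbit.stay (hn : 2 ≤ n) (t : ℕ) (x : ZMod n) (hx : x ∈ O.MaxSet t)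
    (hnf : ¬ 2 ≤ O.S t x) : x ∈ O.MaxSet (t+1) := by
  rw [Orbit.mem_MaxSet] at hx ⊢
  rw [O.Htrans hn t x, O.Mx_succ hn t]
  have h2 : chi (O.S t) x = 0 := if_neg hnf
  have h3 : ¬ 2 ≤ O.S t (x+1) := by
    intro hc
    have hb := O.fire_step hn t x hc
    have hb2 := O.le_Mx t (x+1)
    rw [hx] at hb
    linarith
  have h4 : chi (O.S t) (x+1) = 0 := if_neg h3
  rw [hx, h2, h4]
  ring


def Orbit.rr (v : ZMod n) : ZMod n := 2 * O.a - 1 - v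

lemma Orbit.rr_invol (v : ZMod n) : O.rr (O.rr v) = v := by unfold Orbit.rr; ring

lemma Orbit.mirror_min (hn : 2 ≤ n) (t : ℕ) (x : ZMod n) (hx : x ∈ O.MaxSet t) :
    O.H t (O.rr x) = O.mn t := by
  rw [Orbit.mem_MaxSet] at hx
  apply le_antisymm
  · apply Finset.le_inf'
    intro w _
    have h1 := O.Hmir hn t x (O.rr w)
    have e : 2 * O.a - 1 - O.rr w = w := by unfold Orbit.rr; ring
    rw [e] at h1
    have h2 := O.le_Mx t (O.rr w)
    unfold Orbit.rr at h1 h2 ⊢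
    linarith
  · exact O.mn_le t _

lemma Orbit.osc_all (hn : 2 ≤ n) (t : ℕ) : O.osc t = O.osc 0 := by
  induction t with
  | zero => rfl
  | succ t ih => rw [O.osc_const hn t, ih]

/-- firing counts over any window of length p -/
lemma Orbit.window (T : ℕ) (v : ZMod n) :
    ∑ s ∈ Finset.range O.p, chi (O.S (T + s)) v = O.c v := by
  induction T with
  | zero => simp [Orbit.c]
  | succ T ih =>
      have e1 : ∑ s ∈ Finset.range O.p, chi (O.S (T + 1 + s)) v
          = ∑ s ∈ Finset.range O.p, chi (O.S (T + (s + 1))) v := by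
        apply Finset.sum_congr rfl; intro s _
        have e : T + 1 + s = T + (s + 1) := by omega
        rw [e]
      have e2 : ∑ s ∈ Finset.range (O.p + 1), chi (O.S (T + s)) v
          = ∑ s ∈ Finset.range O.p, chi (O.S (T + (s + 1))) v + chi (O.S (T + 0)) v :=
        Finset.sum_range_succ' _ _
      have e3 : ∑ s ∈ Finset.range (O.p + 1), chi (O.S (T + s)) v
          = ∑ s ∈ Finset.range O.p, chi (O.S (T + s)) v + chi (O.S (T + O.p)) v :=
        Finset.sum_range_succ _ _
      have e4 : chi (O.S (T + O.p)) v = chi (O.S (T + 0)) v := by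
        rw [O.hper T]; rfl
      rw [e1]
      linarith [e2, e3, e4, ih]

lemma Orbit.all_one_of_c_zero (h : O.c O.a = 0) : ∀ v : ZMod n, O.S 0 v = 1 := by
  have hcv : ∀ v, O.c v = 0 := fun v => (O.c_const v O.a).trans h
  have hchi : ∀ v, ¬ 2 ≤ O.S 0 v := by
    intro v hc
    have h0 : ∀ t ∈ Finset.range O.p, (0:ℤ) ≤ chi (O.S t) v := fun t _ => chi_nonneg _ v
    have := (Finset.sum_eq_zero_iff_of_nonneg h0).mp (hcv v) 0
      (Finset.mem_range.mpr O.hp)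
    rw [chi, if_pos hc] at this
    norm_num at this
  have hle : ∀ v, O.S 0 v ≤ 1 := fun v => by have := hchi v; omega
  by_contra hcon
  push_neg at hcon
  obtain ⟨v, hv⟩ := hcon
  have hvlt : O.S 0 v < 1 := by have := hle v; omega
  have hsum := O.hsum 0
  have : ∑ w : ZMod n, O.S 0 w < ∑ _w : ZMod n, 1 :=
    Finset.sum_lt_sum (fun w _ => hle w) ⟨v, Finset.mem_univ v, hvlt⟩
  rw [Finset.sum_const, Finset.card_univ, ZMod.card, smul_eq_mul, mul_one] at this
  omega

section Traj

variable (x0 : ZMod n)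

def Orbit.traj : ℕ → ZMod n
  | 0 => x0
  | t + 1 => Orbit.traj t - (if 2 ≤ O.S t (Orbit.traj t) then 1 else 0)

lemma Orbit.traj_succ (t : ℕ) :
    O.traj x0 (t+1) = O.traj x0 t - (if 2 ≤ O.S t (O.traj x0 t) then 1 else 0) := rfl

lemma Orbit.traj_mem (hn : 2 ≤ n) (hx0 : x0 ∈ O.MaxSet 0) :
    ∀ t, O.traj x0 t ∈ O.MaxSet t := by
  intro t
  induction t with
  | zero => exact hx0
  | succ t ih =>
      rw [O.traj_succ]
      by_cases hf : 2 ≤ O.S t (O.traj x0 t)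
      · rw [if_pos hf]; exact O.move hn t _ ih hf
      · rw [if_neg hf]
        simpa using O.stay hn t _ ih hf

def Orbit.dd (t : ℕ) : ZMod n := 2 * O.traj x0 t - 2 * O.a + 1

lemma Orbit.dd_ne_zero (hn : 2 ≤ n) (hx0 : x0 ∈ O.MaxSet 0) (hosc : 1 ≤ O.osc 0)
    (t : ℕ) : O.dd x0 t ≠ 0 := by
  intro h
  have hx := O.traj_mem x0 hn hx0 t
  have hrr : O.rr (O.traj x0 t) = O.traj x0 t := by
    unfold Orbit.rr
    unfold Orbit.dd at h
    have : 2 * O.traj x0 t = 2 * O.a - 1 := by linear_combination h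
    linear_combination -h
  have h1 := O.mirror_min hn t _ hx
  rw [hrr] at h1
  rw [Orbit.mem_MaxSet] at hx
  have hosct := O.osc_all hn t
  unfold Orbit.osc at hosct hosc
  rw [h1] at hx
  linarith

lemma Orbit.dd_ne_neg_one (hn : 2 ≤ n) (hx0 : x0 ∈ O.MaxSet 0) (hosc : 2 ≤ O.osc 0)
    (t : ℕ) : O.dd x0 t ≠ -1 := by
  intro h
  have hx := O.traj_mem x0 hn hx0 t
  have hrr : O.rr (O.traj x0 t) = O.traj x0 t + 1 := by
    unfold Orbit.rr
    unfold Orbit.dd at h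
    linear_combination -h
  have h1 := O.mirror_min hn t _ hx
  rw [hrr] at h1
  have h2 := O.Hstep hn t (O.traj x0 t + 1)
  have c1 : O.traj x0 t + 1 - 1 = O.traj x0 t := by ring
  rw [c1, h1] at h2
  rw [Orbit.mem_MaxSet] at hx
  have hosct := O.osc_all hn t
  unfold Orbit.osc at hosct hosc
  have hpos : (0:ℤ) ≤ (O.S t (O.traj x0 t + 1) : ℤ) := by positivity
  rw [hx] at h2
  linarith


lemma Orbit.dd_succ_fire (t : ℕ) (hf : 2 ≤ O.S t (O.traj x0 t)) :
    O.dd x0 (t+1) = O.dd x0 t - 2 := by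
  unfold Orbit.dd
  rw [O.traj_succ, if_pos hf]
  ring

lemma Orbit.dd_succ_rest (t : ℕ) (hf : ¬ 2 ≤ O.S t (O.traj x0 t)) :
    O.dd x0 (t+1) = O.dd x0 t := by
  unfold Orbit.dd
  rw [O.traj_succ, if_neg hf]
  ring

lemma val_ge_one [NeZero n] {z : ZMod n} (hz : z ≠ 0) : 1 ≤ z.val := by
  rcases Nat.eq_zero_or_pos z.val with h | h
  · exact absurd ((ZMod.val_eq_zero z).mp h) hz
  · exact h

lemma Orbit.fire_val (hn3 : 3 ≤ n) (hx0 : x0 ∈ O.MaxSet 0) (hosc : 2 ≤ O.osc 0)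
    (t : ℕ) (hf : 2 ≤ O.S t (O.traj x0 t)) :
    3 ≤ (O.dd x0 t).val ∧ (O.dd x0 (t+1)).val = (O.dd x0 t).val - 2 := by
  have hn : 2 ≤ n := by omega
  have hosc1 : 1 ≤ O.osc 0 := by omega
  have h0 := O.dd_ne_zero x0 hn hx0 hosc1 t
  have h1 := O.dd_ne_neg_one x0 hn hx0 hosc t
  have h0' := O.dd_ne_zero x0 hn hx0 hosc1 (t+1)
  have h1' := O.dd_ne_neg_one x0 hn hx0 hosc (t+1)
  rw [O.dd_succ_fire x0 t hf] at h0' h1'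
  set z := O.dd x0 t with hz
  have hzv : ((z.val : ℕ) : ZMod n) = z := ZMod.natCast_rightInverse z
  have hlt : z.val < n := ZMod.val_lt z
  have hv1 : z.val ≠ 1 := by
    intro h
    rw [← hzv, h] at h1'
    rw [Nat.cast_one] at h1'
    exact h1' (by ring)
  have hv2 : z.val ≠ 2 := by
    intro h
    rw [← hzv, h] at h0'
    apply h0'
    rw [Nat.cast_ofNat]
    ring
  have hv0 : 1 ≤ z.val := val_ge_one h0
  have h3 : 3 ≤ z.val := by omega
  refine ⟨h3, ?_⟩
  rw [O.dd_succ_fire x0 t hf]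
  have e : z - 2 = ((z.val - 2 : ℕ) : ZMod n) := by
    rw [Nat.cast_sub (by omega), hzv]
    norm_num
  rw [e, ZMod.val_cast_of_lt (by omega)]

def Orbit.fireCount (T : ℕ) : ℕ :=
  ((Finset.range T).filter (fun s => 2 ≤ O.S s (O.traj x0 s))).card

lemma Orbit.fire_bound (hn3 : 3 ≤ n) (hx0 : x0 ∈ O.MaxSet 0) (hosc : 2 ≤ O.osc 0) :
    ∀ T, (O.dd x0 T).val + 2 * O.fireCount x0 T ≤ (O.dd x0 0).val := by
  intro T
  induction T with
  | zero => simp [Orbit.fireCount]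
  | succ T ih =>
      have hsplit : O.fireCount x0 (T+1)
          = O.fireCount x0 T + (if 2 ≤ O.S T (O.traj x0 T) then 1 else 0) := by
        unfold Orbit.fireCount
        rw [Finset.range_add_one, Finset.filter_insert]
        by_cases hf : 2 ≤ O.S T (O.traj x0 T)
        · rw [if_pos hf, if_pos hf, Finset.card_insert_of_notMem]
          intro hmem
          exact absurd (Finset.mem_range.mp (Finset.mem_filter.mp hmem).1) (lt_irrefl T)
        · rw [if_neg hf, if_neg hf, Nat.add_zero]
      by_cases hf : 2 ≤ O.S T (O.traj x0 T)
      · obtain ⟨h3, hval⟩ := O.fire_val x0 hn3 hx0 hosc T hf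
        rw [hsplit, if_pos hf, hval]
        omega
      · rw [hsplit, if_neg hf, O.dd_succ_rest x0 T hf]
        omega

lemma Orbit.exists_quiet (hn3 : 3 ≤ n) (hx0 : x0 ∈ O.MaxSet 0) (hosc : 2 ≤ O.osc 0) :
    ∃ T, ∀ s, T ≤ s → s < T + O.p → ¬ 2 ≤ O.S s (O.traj x0 s) := by
  by_contra hcon
  push_neg at hcon
  have grow : ∀ K, K ≤ O.fireCount x0 (K * O.p) := by
    intro K
    induction K with
    | zero => exact Nat.zero_le _
    | succ K ih =>
        obtain ⟨s, hs1, hs2, hsf⟩ := hcon (K * O.p)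
        have hsub : insert s ((Finset.range (K * O.p)).filter
            (fun s => 2 ≤ O.S s (O.traj x0 s)))
            ⊆ (Finset.range ((K+1) * O.p)).filter (fun s => 2 ≤ O.S s (O.traj x0 s)) := by
          intro x hx
          rcases Finset.mem_insert.mp hx with rfl | hx
          · apply Finset.mem_filter.mpr
            refine ⟨Finset.mem_range.mpr ?_, hsf⟩
            have : (K+1) * O.p = K * O.p + O.p := by ring
            omega
          · obtain ⟨hx1, hx2⟩ := Finset.mem_filter.mp hx
            exact Finset.mem_filter.mpr
              ⟨Finset.mem_range.mpr (by
                have := Finset.mem_range.mp hx1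
                have h2 : K * O.p ≤ (K+1) * O.p := Nat.mul_le_mul_right _ (by omega)
                omega), hx2⟩
        have hnotmem : s ∉ (Finset.range (K * O.p)).filter
            (fun s => 2 ≤ O.S s (O.traj x0 s)) := by
          intro hmem
          have := Finset.mem_range.mp (Finset.mem_filter.mp hmem).1
          omega
        have hcard := Finset.card_le_card hsub
        rw [Finset.card_insert_of_notMem hnotmem] at hcard
        unfold Orbit.fireCount
        unfold Orbit.fireCount at ih
        omega
  have hbound := O.fire_bound x0 hn3 hx0 hosc ((O.dd x0 0).val * O.p)
  have hK := grow (O.dd x0 0).val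
  have hpos : 1 ≤ (O.dd x0 0).val :=
    val_ge_one (O.dd_ne_zero x0 (by omega) hx0 (by omega) 0)
  omega

lemma Orbit.c_zero_case2 (hn3 : 3 ≤ n) (hx0 : x0 ∈ O.MaxSet 0) (hosc : 2 ≤ O.osc 0) :
    O.c O.a = 0 := by
  obtain ⟨T, hq⟩ := O.exists_quiet x0 hn3 hx0 hosc
  have hconst : ∀ j, j ≤ O.p → O.traj x0 (T + j) = O.traj x0 T := by
    intro j
    induction j with
    | zero => intro _; rfl
    | succ j ih =>
        intro hj
        have ihp := ih (by omega)
        have : T + (j+1) = (T + j) + 1 := by omega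
        rw [this, O.traj_succ, if_neg (hq (T+j) (by omega) (by omega)), sub_zero]
        exact ihp
  have hc : O.c (O.traj x0 T) = 0 := by
    rw [← O.window T]
    apply Finset.sum_eq_zero
    intro s hs
    have hsp := Finset.mem_range.mp hs
    have h1 : O.traj x0 (T + s) = O.traj x0 T := hconst s (by omega)
    have h2 := hq (T + s) (by omega) (by omega)
    rw [h1] at h2
    exact if_neg h2
  rw [O.c_const O.a (O.traj x0 T), hc]

lemma Orbit.c_zero_case1 (hn : 2 ≤ n) (hodd : Odd n) (hosc : O.osc 0 ≤ 1) :
    O.c O.a = 0 := by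
  set u : ZMod n := O.a + (((n-1)/2 : ℕ) : ZMod n) with hu
  have h2m : 2 * ((n-1)/2) = n - 1 := by
    obtain ⟨l, hl⟩ := hodd
    omega
  have hcast : ((n - 1 : ℕ) : ZMod n) = -1 := by
    rw [Nat.cast_sub (by omega), Nat.cast_one, ZMod.natCast_self, zero_sub]
  have h2u : 2 * u = 2 * O.a - 1 := by
    rw [hu]
    have e2 : ((2 * ((n-1)/2) : ℕ) : ZMod n) = 2 * (((n-1)/2 : ℕ) : ZMod n) := by
      push_cast; ring
    rw [mul_add, ← e2, h2m, hcast]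
    ring
  have e : 2 * O.a - (u + 1) = u := by linear_combination -h2u
  have pair : ∀ t, O.S t (u + 1) = O.S t u := by
    intro t
    have := (O.hsym t (u+1)).symm
    rw [e] at this
    exact this
  have noufire : ∀ t, ¬ 2 ≤ O.S t u := by
    intro t hf
    have hf1 : 2 ≤ O.S t (u+1) := by rw [pair t]; exact hf
    have fs1 := O.fire_step hn t u hf1
    have fs2 := O.fire_step hn t (u - 1) (by rwa [sub_add_cancel])
    rw [sub_add_cancel] at fs2
    have hm1 := O.mn_le t (u - 1)
    have hM1 := O.le_Mx t (u + 1)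
    have hosct := O.osc_all hn t
    unfold Orbit.osc at hosct hosc
    linarith
  have hcu : O.c u = 0 := by
    unfold Orbit.c
    apply Finset.sum_eq_zero
    intro t _
    exact if_neg (noufire t)
  rw [O.c_const O.a u, hcu]

/-- Main structural result: a periodic balanced symmetric orbit on an odd cycle
is constantly 1. -/
lemma Orbit.all_one (hn3 : 3 ≤ n) (hodd : Odd n) : ∀ v : ZMod n, O.S 0 v = 1 := by
  have hn : 2 ≤ n := by omega
  apply O.all_one_of_c_zero
  by_cases hosc : 2 ≤ O.osc 0
  · obtain ⟨x0, hx0⟩ := O.MaxSet_nonempty 0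
    exact O.c_zero_case2 x0 hn3 hx0 hosc
  · exact O.c_zero_case1 hn hodd (by omega)

end Traj

end Odd

section Sym

variable [NeZero n]

lemma shareMap_sym (a : ZMod n) (S : ZMod n → ℕ) (h : ∀ v, S (2*a - v) = S v) (v : ZMod n) :
    shareMap n S (2*a - v) = shareMap n S v := by
  unfold shareMap
  have e1 : 2*a - v - 1 = 2*a - (v+1) := by ring
  have e2 : 2*a - v + 1 = 2*a - (v-1) := by ring
  rw [e1, e2, h v, h (v+1), h (v-1)]
  ring

lemma iterate_sym (a : ZMod n) (S : ZMod n → ℕ) (h : ∀ v, S (2*a - v) = S v) (m : ℕ) :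
    ∀ v, (shareMap n)^[m] S (2*a - v) = (shareMap n)^[m] S v := by
  induction m with
  | zero => exact h
  | succ m ih =>
      intro v
      rw [Function.iterate_succ_apply']
      exact shareMap_sym a _ ih v

end Sym

end Candy


/-- Monopoly states are ultimately equitable if and only if the number of children is
odd. -/
theorem monopoly_equitable_iff_odd (n : ℕ) (hn : 3 ≤ n) (a : ZMod n)
    (M : ZMod n → ℕ) (hMa : M a = n) (hM0 : ∀ i : ZMod n, i ≠ a → M i = 0)
    (k : ℕ) (hper : IsPeriodicState n ((shareMap n)^[k] M)) :
    (∃ m : ℕ, ∀ i : ZMod n, (shareMap n)^[m] M i = 1) ↔ Odd n := by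
  haveI : NeZero n := ⟨by omega⟩
  constructor
  · rintro ⟨m, hm⟩
    by_contra hodd
    exact Candy.even_no_ones hn (Nat.not_odd_iff_even.mp hodd) a M hMa hM0 m hm
  · intro hodd
    obtain ⟨p, hp1, hpfix⟩ := hper
    refine ⟨k, ?_⟩
    have hMsum : ∑ v : ZMod n, M v = n := by
      rw [Finset.sum_eq_single a]
      · exact hMa
      · intro i _ hi; exact hM0 i hi
      · intro h; exact absurd (Finset.mem_univ a) h
    have hMsym : ∀ v : ZMod n, M (2*a - v) = M v := by
      intro v
      by_cases hv : v = a
      · rw [hv]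
        have e : 2*a - a = a := by ring
        rw [e]
      · have hv2 : 2*a - v ≠ a := by
          intro h
          apply hv
          have : v = 2*a - (2*a - v) := by ring
          rw [this, h]; ring
        rw [hM0 _ hv2, hM0 _ hv]
    let O : Candy.Orbit n :=
      { p := p
        hp := hp1
        S := fun t => (shareMap n)^[t] ((shareMap n)^[k] M)
        hstep := fun t => Function.iterate_succ_apply' _ t _
        hper := fun t => by
          show (shareMap n)^[t + p] _ = _
          rw [Function.iterate_add_apply, hpfix]
        hsum := fun t => by
          rw [Candy.sum_iterate, Candy.sum_iterate, hMsum]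
        a := a
        hsym := fun t v =>
          Candy.iterate_sym a _ (Candy.iterate_sym a M hMsym k) t v }
    intro i
    have := O.all_one hn hodd i
    exact this
end

section
/- Periodic states are bounded by 2: if S is a balanced periodic state of the balanced candy sharing game with n children, then S i ≤ 2 for every i ∈ ZMod n. -/
section helpers
variable {n : ℕ}

/-- integer indicator that child i shares -/
def auxChi (n : ℕ) (T : ZMod n → ℕ) (i : ZMod n) : ℤ := if 2 ≤ T i then 1 else 0

lemma auxChi_nonneg (T : ZMod n → ℕ) (i : ZMod n) : 0 ≤ auxChi n T i := by
  unfold auxChi; split <;> omega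

lemma auxChi_le_one (T : ZMod n → ℕ) (i : ZMod n) : auxChi n T i ≤ 1 := by
  unfold auxChi; split <;> omega

lemma auxChi_big {T : ZMod n → ℕ} {i : ZMod n} (h : auxChi n T i ≠ 0) : 2 ≤ T i := by
  unfold auxChi at h; by_contra hc; simp [hc] at h

lemma shareMap_int (T : ZMod n → ℕ) (i : ZMod n) :
    ((shareMap n T) i : ℤ) =
      (T i : ℤ) - 2 * auxChi n T i + auxChi n T (i - 1) + auxChi n T (i + 1) := by
  unfold shareMap auxChi
  split_ifs <;> push_cast <;> omega

lemma zmodCircle [NeZero n] {α : Sort*} (h : ZMod n → α) (H : ∀ m, h (m + 1) = h m)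
    (m : ZMod n) : h m = h 0 := by
  have key : ∀ a : ℕ, h ((a : ZMod n)) = h 0 := by
    intro a
    induction a with
    | zero => simp
    | succ b ih => rw [Nat.cast_succ, H]; exact ih
  have := key m.val
  rwa [ZMod.natCast_rightInverse m] at this

lemma sum_shift [NeZero n] (g : ZMod n → ℤ) (c : ZMod n) :
    ∑ i : ZMod n, g (i + c) = ∑ i : ZMod n, g i :=
  Fintype.sum_equiv (Equiv.addRight c) _ _ (fun _ => rfl)

lemma sum_shift_sub [NeZero n] (g : ZMod n → ℤ) (c : ZMod n) :
    ∑ i : ZMod n, g (i - c) = ∑ i : ZMod n, g i :=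
  Fintype.sum_equiv (Equiv.subRight c) _ _ (fun _ => rfl)

end helpers
section helpers2
variable {n : ℕ} [NeZero n]

lemma sum_range_zmod (g : ZMod n → ℤ) :
    ∑ j ∈ Finset.range n, g ((j : ℕ) : ZMod n) = ∑ i : ZMod n, g i := by
  apply Finset.sum_nbij' (fun j => ((j : ℕ) : ZMod n)) (fun m => m.val) <;> simp
  · exact fun a => ZMod.val_lt a
  · exact fun a ha => Nat.mod_eq_of_lt ha

noncomputable def maxV (g : ZMod n → ℤ) : ℤ :=
  Finset.max' (Finset.image g Finset.univ)
    ⟨g 0, Finset.mem_image_of_mem g (Finset.mem_univ 0)⟩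

noncomputable def minV (g : ZMod n → ℤ) : ℤ :=
  Finset.min' (Finset.image g Finset.univ)
    ⟨g 0, Finset.mem_image_of_mem g (Finset.mem_univ 0)⟩

lemma le_maxV (g : ZMod n → ℤ) (m : ZMod n) : g m ≤ maxV g :=
  Finset.le_max' _ _ (Finset.mem_image_of_mem g (Finset.mem_univ m))

lemma minV_le (g : ZMod n → ℤ) (m : ZMod n) : minV g ≤ g m :=
  Finset.min'_le _ _ (Finset.mem_image_of_mem g (Finset.mem_univ m))

lemma exists_maxV (g : ZMod n → ℤ) : ∃ m, g m = maxV g := by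
  have := Finset.max'_mem (Finset.image g Finset.univ)
    ⟨g 0, Finset.mem_image_of_mem g (Finset.mem_univ 0)⟩
  rw [Finset.mem_image] at this
  obtain ⟨m, _, hm⟩ := this
  exact ⟨m, hm⟩

lemma exists_minV (g : ZMod n → ℤ) : ∃ m, g m = minV g := by
  have := Finset.min'_mem (Finset.image g Finset.univ)
    ⟨g 0, Finset.mem_image_of_mem g (Finset.mem_univ 0)⟩
  rw [Finset.mem_image] at this
  obtain ⟨m, _, hm⟩ := this
  exact ⟨m, hm⟩

lemma maxV_le {g : ZMod n → ℤ} {c : ℤ} (H : ∀ m, g m ≤ c) : maxV g ≤ c := by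
  apply Finset.max'_le
  intro y hy
  rw [Finset.mem_image] at hy
  obtain ⟨m, _, rfl⟩ := hy
  exact H m

lemma le_minV {g : ZMod n → ℤ} {c : ℤ} (H : ∀ m, c ≤ g m) : c ≤ minV g := by
  apply Finset.le_min'
  intro y hy
  rw [Finset.mem_image] at hy
  obtain ⟨m, _, rfl⟩ := hy
  exact H m

lemma maxV_shift {g g' : ZMod n → ℤ} {c : ℤ} (h : ∀ m, g' m = g m + c) :
    maxV g' = maxV g + c := by
  apply le_antisymm
  · exact maxV_le (fun m => by rw [h m]; exact add_le_add_left (le_maxV g m) c)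
  · obtain ⟨m, hm⟩ := exists_maxV g
    rw [← hm, ← h m]; exact le_maxV g' m

lemma minV_shift {g g' : ZMod n → ℤ} {c : ℤ} (h : ∀ m, g' m = g m + c) :
    minV g' = minV g + c := by
  apply le_antisymm
  · obtain ⟨m, hm⟩ := exists_minV g
    rw [← hm, ← h m]; exact minV_le g' m
  · exact le_minV (fun m => by rw [h m]; exact add_le_add_left (minV_le g m) c)

/-- sum is conserved by the sharing map -/
lemma sum_shareMap (T : ZMod n → ℕ) :
    ∑ i : ZMod n, (shareMap n T i : ℤ) = ∑ i : ZMod n, (T i : ℤ) := by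
  have : ∀ i : ZMod n, (shareMap n T i : ℤ) =
      (T i : ℤ) - 2 * auxChi n T i + auxChi n T (i - 1) + auxChi n T (i + 1) :=
    shareMap_int T
  rw [Finset.sum_congr rfl (fun i _ => this i)]
  have h1 : ∑ i : ZMod n, auxChi n T (i - 1) = ∑ i : ZMod n, auxChi n T i :=
    sum_shift_sub (auxChi n T) 1
  have h2 : ∑ i : ZMod n, auxChi n T (i + 1) = ∑ i : ZMod n, auxChi n T i :=
    sum_shift (auxChi n T) 1
  simp only [Finset.sum_add_distrib, Finset.sum_sub_distrib, h1, h2]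
  rw [← Finset.mul_sum]
  ring

/-- existence of a walk for a balanced state -/
lemma exists_walk {T : ZMod n → ℕ} (hbal : ∑ i : ZMod n, T i = n) :
    ∃ V : ZMod n → ℤ, ∀ m, V (m + 1) = V m + 1 - T m := by
  classical
  refine ⟨fun m => (m.val : ℤ) - ∑ j ∈ Finset.range m.val, (T ((j : ℕ) : ZMod n) : ℤ), ?_⟩
  intro m
  have hsum : ∑ j ∈ Finset.range n, (T ((j : ℕ) : ZMod n) : ℤ) = (n : ℤ) := by
    rw [sum_range_zmod (fun i => (T i : ℤ))]
    rw [← Nat.cast_sum]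
    exact_mod_cast congrArg (Nat.cast : ℕ → ℤ) hbal
  by_cases h0 : m + 1 = 0
  · -- m.val = n - 1
    have hvm : m.val + 1 = n := by
      have : ((m.val + 1 : ℕ) : ZMod n) = 0 := by
        push_cast
        rw [ZMod.natCast_zmod_val m]
        exact h0
      have hdvd := (ZMod.natCast_eq_zero_iff _ _).1 this
      have hlt := ZMod.val_lt m
      have hle := Nat.le_of_dvd (Nat.succ_pos _) hdvd
      omega
    have hcast : ((m.val : ℕ) : ZMod n) = m := ZMod.natCast_zmod_val m
    rw [h0]
    simp only [ZMod.val_zero, Finset.range_zero, Finset.sum_empty, Nat.cast_zero]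
    have : ∑ j ∈ Finset.range (m.val + 1), (T ((j : ℕ) : ZMod n) : ℤ)
        = ∑ j ∈ Finset.range m.val, (T ((j : ℕ) : ZMod n) : ℤ) + T m := by
      rw [Finset.sum_range_succ, hcast]
    rw [hvm] at this
    rw [hsum] at this
    omega
  · -- (m+1).val = m.val + 1
    have hne : m.val + 1 < n := by
      have hlt := ZMod.val_lt m
      rcases Nat.lt_or_ge (m.val + 1) n with h | h
      · exact h
      · exfalso
        have : m.val + 1 = n := by omega
        apply h0
        have : ((m.val + 1 : ℕ) : ZMod n) = 0 := by
          rw [this]; exact ZMod.natCast_self n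
        push_cast at this
        rwa [ZMod.natCast_zmod_val m] at this
    have hval : (m + 1).val = m.val + 1 := by
      have : ((m.val + 1 : ℕ) : ZMod n) = m + 1 := by
        push_cast
        rw [ZMod.natCast_zmod_val m]
      rw [← this, ZMod.val_natCast_of_lt hne]
    simp only
    rw [hval, Finset.sum_range_succ, ZMod.natCast_zmod_val m]
    push_cast
    ring

end helpers2
set_option maxHeartbeats 1000000 in
/-- Periodic balanced states are bounded by 2. -/
theorem periodic_le_two (n : ℕ) (hn : 3 ≤ n) [NeZero n] (S : ZMod n → ℕ)
    (hbal : IsBalanced n S) (hper : IsPeriodicState n S) :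
    ∀ i : ZMod n, S i ≤ 2 := by
  classical
  intro i
  by_contra hi
  have hi3 : 3 ≤ S i := by omega
  obtain ⟨k, hk1, hkfix⟩ := hper
  haveI : Fact (1 < n) := ⟨by omega⟩
  -- orbit
  set P : ℕ → ZMod n → ℕ := fun j => (shareMap n)^[j] S with hP
  have hP0 : P 0 = S := rfl
  have hPsucc : ∀ j, P (j + 1) = shareMap n (P j) := fun j =>
    Function.iterate_succ_apply' (shareMap n) j S
  have hPper : ∀ t, P (t + k) = P t := by
    intro t
    show (shareMap n)^[t + k] S = (shareMap n)^[t] S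
    rw [Function.iterate_add_apply, hkfix]
  have hstep : ∀ j m, (P (j + 1) m : ℤ) =
      (P j m : ℤ) - 2 * auxChi n (P j) m + auxChi n (P j) (m - 1) + auxChi n (P j) (m + 1) := by
    intro j m
    rw [hPsucc j]
    exact shareMap_int (P j) m
  -- walks
  obtain ⟨V0, hV0⟩ := exists_walk (T := S) hbal
  set Vs : ℕ → ZMod n → ℤ :=
    fun j => Nat.rec V0 (fun j Vj => fun m => Vj m + auxChi n (P j) (m - 1) - auxChi n (P j) m) j
    with hVs
  have hVsS : ∀ j m, Vs (j + 1) m = Vs j m + auxChi n (P j) (m - 1) - auxChi n (P j) m :=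
    fun j m => rfl
  have hwalk : ∀ j m, Vs j (m + 1) = Vs j m + 1 - P j m := by
    intro j
    induction j with
    | zero => exact fun m => hV0 m
    | succ j ih =>
      intro m
      have h1 := hVsS j (m + 1)
      have h2 := hVsS j m
      have h3 := ih m
      have h4 := hstep j m
      rw [add_sub_cancel_right] at h1
      omega
  -- descent lemma
  have hdesc : ∀ j m, 2 ≤ P j m → Vs j (m + 1) ≤ Vs j m - 1 := by
    intro j m h2
    have := hwalk j m
    omega
  -- max and min
  set μ : ℕ → ℤ := fun j => maxV (Vs j) with hμ
  set ν : ℕ → ℤ := fun j => minV (Vs j) with hν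
  have hmaxle : ∀ j m, Vs j m ≤ μ j := fun j m => le_maxV (Vs j) m
  have hminle : ∀ j m, ν j ≤ Vs j m := fun j m => minV_le (Vs j) m
  have hμub : ∀ (j : ℕ) (c : ℤ), (∀ m, Vs j m ≤ c) → μ j ≤ c := fun j c h => maxV_le h
  have hνlb : ∀ (j : ℕ) (c : ℤ), (∀ m, c ≤ Vs j m) → c ≤ ν j := fun j c h => le_minV h
  have hμex : ∀ j, ∃ m, Vs j m = μ j := fun j => exists_maxV (Vs j)
  have hνex : ∀ j, ∃ m, Vs j m = ν j := fun j => exists_minV (Vs j)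
  have hchi_cases : ∀ j m, auxChi n (P j) m = 0 ∨ (auxChi n (P j) m = 1 ∧ 2 ≤ P j m) := by
    intro j m
    unfold auxChi
    split
    · right; constructor; rfl; assumption
    · left; rfl
  have hμmono : ∀ j, μ (j + 1) ≤ μ j := by
    intro j
    refine hμub (j + 1) (μ j) ?_
    intro m
    have h2 := hVsS j m
    rcases hchi_cases j (m - 1) with hA | ⟨hA, hA2⟩
    · have hb := auxChi_nonneg (P j) m
      have := hmaxle j m
      omega
    · have hd := hdesc j (m - 1) hA2
      rw [sub_add_cancel] at hd
      have hb := auxChi_nonneg (P j) m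
      have := hmaxle j (m - 1)
      omega
  have hνmono : ∀ j, ν j ≤ ν (j + 1) := by
    intro j
    refine hνlb (j + 1) (ν j) ?_
    intro m
    have h2 := hVsS j m
    rcases hchi_cases j m with hB | ⟨hB, hB2⟩
    · have hb := auxChi_nonneg (P j) (m - 1)
      have := hminle j m
      omega
    · have hd := hdesc j m hB2
      have hb := auxChi_nonneg (P j) (m - 1)
      have := hminle j (m + 1)
      omega
  -- D is intrinsic (walks of equal states differ by a constant)
  have hDper : ∀ j, μ (j + k) - ν (j + k) = μ j - ν j := by
    intro j
    have hW1 : ∀ m, Vs (j + k) (m + 1) = Vs (j + k) m + 1 - P j m := by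
      intro m
      have := hwalk (j + k) m
      rwa [hPper j] at this
    set h : ZMod n → ℤ := fun m => Vs (j + k) m - Vs j m with hh
    have hstep' : ∀ m, h (m + 1) = h m := by
      intro m
      have h1 := hW1 m
      have h2 := hwalk j m
      simp only [hh]
      omega
    have hconst : ∀ m, h m = h 0 := zmodCircle h hstep'
    have hshift : ∀ m, Vs (j + k) m = Vs j m + h 0 := by
      intro m
      have := hconst m
      simp only [hh] at this ⊢
      omega
    have e1 : μ (j + k) = μ j + h 0 := maxV_shift hshift
    have e2 : ν (j + k) = ν j + h 0 := minV_shift hshift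
    omega
  have hDle : ∀ j j', j ≤ j' → μ j' - ν j' ≤ μ j - ν j := by
    intro j j' hj
    induction j', hj using Nat.le_induction with
    | base => exact le_refl _
    | succ j' hjj ih =>
      have := hμmono j'
      have := hνmono j'
      omega
  have hDmul : ∀ m : ℕ, μ (k * m) - ν (k * m) = μ 0 - ν 0 := by
    intro m
    induction m with
    | zero => simp
    | succ m ih =>
      have : k * (m + 1) = k * m + k := by ring
      rw [this, hDper (k * m), ih]
  have hDconst : ∀ j, μ j - ν j = μ 0 - ν 0 := by
    intro j
    have h1 : μ j - ν j ≤ μ 0 - ν 0 := hDle 0 j (Nat.zero_le j)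
    have h2 : j ≤ k * j := Nat.le_mul_of_pos_left j (by omega)
    have h3 : μ (k * j) - ν (k * j) ≤ μ j - ν j := hDle j (k * j) h2
    have h4 := hDmul j
    omega
  have hμle : ∀ j, μ j ≤ μ 0 := by
    intro j
    induction j with
    | zero => exact le_refl _
    | succ j ih => exact le_trans (hμmono j) ih
  have hνge : ∀ j, ν 0 ≤ ν j := by
    intro j
    induction j with
    | zero => exact le_refl _
    | succ j ih => exact le_trans ih (hνmono j)
  have hμc : ∀ j, μ j = μ 0 := by
    intro j
    have := hDconst j
    have := hμle j
    have := hνge j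
    omega
  have hνc : ∀ j, ν j = ν 0 := by
    intro j
    have := hDconst j
    have := hμle j
    have := hνge j
    omega
  -- the gap is at least 2
  have hD2 : ν 0 ≤ μ 0 - 2 := by
    have h1 := hwalk 0 i
    have h2 : (P 0 i : ℤ) = (S i : ℤ) := by rw [hP0]
    have h3 := hmaxle 0 i
    have h4 := hminle 0 (i + 1)
    have h5 : (3 : ℤ) ≤ (S i : ℤ) := by exact_mod_cast hi3
    omega

  -- parent existence for maximum achievers
  have hparmax : ∀ (t : ℕ) (m : ZMod n), ∃ p : ZMod n, Vs (t+1) m = μ 0 →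
      Vs t p = μ 0 ∧ ((p = m ∧ auxChi n (P t) m = 0) ∨ p = m - 1) := by
    intro t m
    by_cases h : Vs (t+1) m = μ 0
    · rcases hchi_cases t (m - 1) with hA | ⟨hA, hA2⟩
      · refine ⟨m, fun _ => ?_⟩
        have h2 := hVsS t m
        have h3 := hmaxle t m
        have hμt : μ t = μ 0 := hμc t
        rcases hchi_cases t m with hb | ⟨hb, _⟩
        · exact ⟨by omega, Or.inl ⟨rfl, hb⟩⟩
        · exfalso; omega
      · refine ⟨m - 1, fun _ => ?_⟩
        have h2 := hVsS t m
        have hd := hdesc t (m-1) hA2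
        rw [sub_add_cancel] at hd
        have h3 := hmaxle t (m - 1)
        have hb := auxChi_nonneg (P t) m
        have hμt : μ t = μ 0 := hμc t
        exact ⟨by omega, Or.inr rfl⟩
    · exact ⟨m, fun h' => absurd h' h⟩
  have hparmin : ∀ (t : ℕ) (m : ZMod n), ∃ p : ZMod n, Vs (t+1) m = ν 0 →
      Vs t p = ν 0 ∧ (p = m ∨ p = m + 1) := by
    intro t m
    by_cases h : Vs (t+1) m = ν 0
    · rcases hchi_cases t m with hB | ⟨hB, hB2⟩
      · refine ⟨m, fun _ => ?_⟩
        have h2 := hVsS t m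
        have hb := auxChi_nonneg (P t) (m - 1)
        have h3 := hminle t m
        have hνt : ν t = ν 0 := hνc t
        exact ⟨by omega, Or.inl rfl⟩
      · refine ⟨m + 1, fun _ => ?_⟩
        have h2 := hVsS t m
        have hd := hdesc t m hB2
        have h3 := hminle t (m + 1)
        have hb := auxChi_nonneg (P t) (m - 1)
        have hνt : ν t = ν 0 := hνc t
        exact ⟨by omega, Or.inr rfl⟩
    · exact ⟨m, fun h' => absurd h' h⟩
  choose fmax hfmax using hparmax
  choose fmin hfmin using hparmin
  set J : ℕ := (n+1)*k with hJ
  obtain ⟨x0, hx0⟩ := hμex J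
  obtain ⟨y0, hy0⟩ := hνex J
  set x : ℕ → ZMod n := fun r => Nat.rec x0 (fun r xr => fmax (J - (r+1)) xr) r with hx
  set y : ℕ → ZMod n := fun r => Nat.rec y0 (fun r yr => fmin (J - (r+1)) yr) r with hy
  have hxs : ∀ r, x (r+1) = fmax (J - (r+1)) (x r) := fun r => rfl
  have hys : ∀ r, y (r+1) = fmin (J - (r+1)) (y r) := fun r => rfl
  have hxinv : ∀ r, r ≤ J → Vs (J - r) (x r) = μ 0 := by
    intro r
    induction r with
    | zero =>
      intro _
      have e : J - 0 = J := by omega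
      rw [e]
      exact hx0.trans (hμc J)
    | succ r ih =>
      intro hr
      have epre : Vs ((J - (r+1)) + 1) (x r) = μ 0 := by
        have e : (J - (r+1)) + 1 = J - r := by omega
        rw [e]; exact ih (by omega)
      rw [hxs r]
      exact (hfmax (J - (r+1)) (x r) epre).1
  have hyinv : ∀ r, r ≤ J → Vs (J - r) (y r) = ν 0 := by
    intro r
    induction r with
    | zero =>
      intro _
      have e : J - 0 = J := by omega
      rw [e]
      exact hy0.trans (hνc J)
    | succ r ih =>
      intro hr
      have epre : Vs ((J - (r+1)) + 1) (y r) = ν 0 := by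
        have e : (J - (r+1)) + 1 = J - r := by omega
        rw [e]; exact ih (by omega)
      rw [hys r]
      exact (hfmin (J - (r+1)) (y r) epre).1
  have hxstepcase : ∀ r, r + 1 ≤ J →
      (x (r+1) = x r ∧ auxChi n (P (J - (r+1))) (x r) = 0) ∨ x (r+1) = x r - 1 := by
    intro r hr
    have epre : Vs ((J - (r+1)) + 1) (x r) = μ 0 := by
      have e : (J - (r+1)) + 1 = J - r := by omega
      rw [e]; exact hxinv r (by omega)
    have h2 := (hfmax (J - (r+1)) (x r) epre).2
    rw [hxs r]
    exact h2
  have hystepcase : ∀ r, r + 1 ≤ J → y (r+1) = y r ∨ y (r+1) = y r + 1 := by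
    intro r hr
    have epre : Vs ((J - (r+1)) + 1) (y r) = ν 0 := by
      have e : (J - (r+1)) + 1 = J - r := by omega
      rw [e]; exact hyinv r (by omega)
    have h2 := (hfmin (J - (r+1)) (y r) epre).2
    rw [hys r]
    exact h2
  -- distance between the min chain and the max chain
  set Z : ℕ → ℕ := fun r => (y r - x r).val with hZdef
  have hone : (1 : ZMod n) ≠ 0 := one_ne_zero
  have hZne0 : ∀ r, r ≤ J → y r - x r ≠ 0 := by
    intro r hr h0
    have hxy : y r = x r := sub_eq_zero.mp h0
    have h1 := hxinv r hr
    have h2 := hyinv r hr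
    rw [hxy] at h2
    omega
  have hZnem1 : ∀ r, r ≤ J → y r - x r ≠ -1 := by
    intro r hr h0
    have hxy : x r = y r + 1 := by
      have h1 := sub_eq_iff_eq_add.mp h0
      rw [h1]; ring
    have h1 := hxinv r hr
    have h2 := hyinv r hr
    have hw := hwalk (J - r) (y r)
    rw [← hxy] at hw
    have hp : (0:ℤ) ≤ (P (J - r) (y r) : ℤ) := by positivity
    omega
  have hvalm1 : ∀ v : ZMod n, v.val = n - 1 → v = -1 := by
    intro v hv
    have e1 : ((n - 1 : ℕ) : ZMod n) = -1 := by
      have h1 : ((n : ℕ) : ZMod n) = 0 := ZMod.natCast_self n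
      rw [Nat.cast_sub (by omega : 1 ≤ n), h1]
      ring
    have e2 : ((v.val : ℕ) : ZMod n) = v := ZMod.natCast_zmod_val v
    rw [← e2, hv]
    exact e1
  have hZbound : ∀ r, r ≤ J → 1 ≤ Z r ∧ Z r ≤ n - 2 := by
    intro r hr
    have h0 := hZne0 r hr
    have h1 : Z r ≠ 0 := fun h => h0 ((ZMod.val_eq_zero _).mp h)
    have h2 : Z r < n := ZMod.val_lt _
    have h3 : Z r ≠ n - 1 := fun h => hZnem1 r hr (hvalm1 _ h)
    omega
  have hZstep : ∀ r, r + 1 ≤ J → Z r ≤ Z (r+1) ∧ (x (r+1) ≠ x r → Z r + 1 ≤ Z (r+1)) := by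
    intro r hr
    obtain ⟨d, hd2, hdsub, hdmove⟩ :
        ∃ d : ℕ, d ≤ 2 ∧ y (r+1) - x (r+1) = (y r - x r) + (d : ZMod n)
          ∧ (x (r+1) ≠ x r → 1 ≤ d) := by
      rcases hxstepcase r hr with ⟨hx1, _⟩ | hx1 <;> rcases hystepcase r hr with hy1 | hy1
      · exact ⟨0, by omega, by rw [hx1, hy1]; push_cast; ring, fun h => absurd hx1 h⟩
      · exact ⟨1, by omega, by rw [hx1, hy1]; push_cast; ring, fun h => absurd hx1 h⟩
      · refine ⟨1, by omega, by rw [hx1, hy1]; push_cast; ring, fun _ => le_refl 1⟩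
      · exact ⟨2, by omega, by rw [hx1, hy1]; push_cast; ring, fun _ => by omega⟩
    have hb := hZbound r (by omega)
    have hb1 := hZbound (r+1) hr
    have hdval : ((d : ℕ) : ZMod n).val = d := ZMod.val_natCast_of_lt (by omega)
    have hva : Z (r+1) = (Z r + d) % n := by
      show (y (r+1) - x (r+1)).val = _
      rw [hdsub, ZMod.val_add, hdval]
    by_cases hcase : Z r + d < n
    · rw [Nat.mod_eq_of_lt hcase] at hva
      exact ⟨by omega, fun hm => by have := hdmove hm; omega⟩
    · have he : Z r + d = n := by omega
      rw [he, Nat.mod_self] at hva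
      omega
  have hZmono : ∀ r r' : ℕ, r ≤ r' → r' ≤ J → Z r ≤ Z r' := by
    intro r r' hle
    induction r', hle using Nat.le_induction with
    | base => intro _; exact le_refl _
    | succ r' hrr ih =>
      intro hJ'
      have h1 := ih (by omega)
      have h2 := (hZstep r' (by omega)).1
      omega
  -- window counting
  have hmulle : ∀ q : ℕ, q ≤ n + 1 → q * k ≤ J := by
    intro q hq
    rw [hJ]
    exact Nat.mul_le_mul_right k hq
  have hwin : ∀ q : ℕ, q ≤ n + 1 →
      (∀ q', q' < q → ∃ r, q'*k ≤ r ∧ r < q'*k + k ∧ x (r+1) ≠ x r) →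
      Z 0 + q ≤ Z (q*k) := by
    intro q
    induction q with
    | zero => intro _ _; simp
    | succ q ih =>
      intro hq hmv
      have h1 := ih (by omega) (fun q' hq' => hmv q' (by omega))
      obtain ⟨r, hr1, hr2, hrm⟩ := hmv q (by omega)
      have hqk : q * k + k = (q+1) * k := by ring
      have hJk : (q+1) * k ≤ J := hmulle (q+1) hq
      have e1 : Z (q*k) ≤ Z r := hZmono (q*k) r hr1 (by omega)
      have e2 := (hZstep r (by omega)).2 hrm
      have e3 : Z (r+1) ≤ Z ((q+1)*k) := hZmono (r+1) ((q+1)*k) (by omega) (by omega)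
      omega
  have hquietex : ∃ q, q < n + 1 ∧ ∀ r, q*k ≤ r → r < q*k + k → x (r+1) = x r := by
    by_contra hno
    push_neg at hno
    have hall : ∀ q', q' < n + 1 → ∃ r, q'*k ≤ r ∧ r < q'*k + k ∧ x (r+1) ≠ x r := by
      intro q' hq'
      obtain ⟨r, h1, h2, h3⟩ := hno q' hq'
      exact ⟨r, h1, h2, h3⟩
    have h2 := hwin (n+1) (le_refl _) hall
    have e : (n+1)*k = J := hJ.symm
    rw [e] at h2
    have hZJ := hZbound J (le_refl _)
    have hZ0 := hZbound 0 (Nat.zero_le _)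
    omega
  obtain ⟨q, hqlt, hquiet⟩ := hquietex
  have hxconst : ∀ j, j ≤ k → x (q*k + j) = x (q*k) := by
    intro j
    induction j with
    | zero => intro _; rfl
    | succ j ih =>
      intro hj
      have h1 : x (q*k + j + 1) = x (q*k + j) := hquiet (q*k + j) (by omega) (by omega)
      have e : q*k + (j+1) = q*k + j + 1 := by omega
      rw [e, h1]
      exact ih (by omega)
  set T : ℕ := (n - q) * k with hT
  have hkey : T + k + q * k = J := by
    rw [hT, hJ]
    have h1 : (n - q) * k + k + q * k = ((n - q) + q + 1) * k := by ring
    have h2 : (n - q) + q + 1 = n + 1 := by omega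
    rw [h1, h2]
  have hTtime : ∀ j, j < k → auxChi n (P (T + j)) (x (q*k)) = 0 := by
    intro j hj
    set r : ℕ := q*k + (k - 1 - j) with hr
    have hrw : r < q*k + k := by omega
    have hrlo : q*k ≤ r := by omega
    have hstay : x (r+1) = x r := hquiet r hrlo hrw
    have hr1J : r + 1 ≤ J := by omega
    rcases hxstepcase r hr1J with ⟨_, hchi0⟩ | hmv
    · have hJr : J - (r+1) = T + j := by omega
      have hxr : x r = x (q*k) := by
        rw [hr]
        exact hxconst (k - 1 - j) (by omega)
      rw [hJr, hxr] at hchi0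
      exact hchi0
    · exfalso
      rw [hstay] at hmv
      exact hone (sub_eq_self.mp hmv.symm)

  -- equal firing counts over the window [T, T+k)
  set a : ZMod n → ℤ := fun i' => ∑ j ∈ Finset.range k, auxChi n (P (T + j)) i' with ha
  have htel : ∀ i' : ZMod n, (-2) * a i' + a (i' - 1) + a (i' + 1) = 0 := by
    intro i'
    have h0 : ∑ j ∈ Finset.range k, ((P (T + (j+1)) i' : ℤ) - (P (T + j) i' : ℤ)) = 0 := by
      rw [Finset.sum_range_sub (fun j => (P (T + j) i' : ℤ))]
      simp only [Nat.add_zero]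
      rw [hPper T]
      ring
    have hsplit : ∑ j ∈ Finset.range k, ((-2) * auxChi n (P (T+j)) i'
          + auxChi n (P (T+j)) (i'-1) + auxChi n (P (T+j)) (i'+1))
        = (-2) * a i' + a (i'-1) + a (i'+1) := by
      rw [Finset.sum_add_distrib, Finset.sum_add_distrib, ← Finset.mul_sum]
    have hterm : ∀ j ∈ Finset.range k, ((-2) * auxChi n (P (T+j)) i'
          + auxChi n (P (T+j)) (i'-1) + auxChi n (P (T+j)) (i'+1))
        = ((P (T + (j+1)) i' : ℤ) - (P (T + j) i' : ℤ)) := by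
      intro j _
      have e : T + (j + 1) = (T + j) + 1 := rfl
      rw [e]
      have := hstep (T + j) i'
      omega
    rw [← hsplit, Finset.sum_congr rfl hterm]
    exact h0
  set c : ZMod n → ℤ := fun i' => a (i' + 1) - a i' with hc
  have hcstep : ∀ m : ZMod n, c (m + 1) = c m := by
    intro m
    have h1 := htel (m + 1)
    rw [add_sub_cancel_right] at h1
    simp only [hc]
    omega
  have hcconst : ∀ m, c m = c 0 := zmodCircle c hcstep
  have hsumc : ∑ m : ZMod n, c m = 0 := by
    simp only [hc]
    rw [Finset.sum_sub_distrib, sum_shift (fun m => a m) 1]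
    ring
  have hc0 : c 0 = 0 := by
    have h1 : ∑ m : ZMod n, c m = (n : ℤ) * c 0 := by
      rw [Finset.sum_congr rfl (fun m _ => hcconst m), Finset.sum_const,
        Finset.card_univ, ZMod.card n, nsmul_eq_mul]
    rw [hsumc] at h1
    have hn0 : (n:ℤ) ≠ 0 := by exact_mod_cast (by omega : n ≠ 0)
    exact (mul_eq_zero.mp h1.symm).resolve_left hn0
  have hastep : ∀ m : ZMod n, a (m + 1) = a m := by
    intro m
    have h1 := hcconst m
    rw [hc0] at h1
    simp only [hc] at h1
    omega
  have haconst : ∀ m, a m = a 0 := zmodCircle a hastep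
  have haxstar : a (x (q*k)) = 0 := by
    apply Finset.sum_eq_zero
    intro j hj
    exact hTtime j (Finset.mem_range.mp hj)
  have hazero : ∀ i' : ZMod n, a i' = 0 := by
    intro i'
    rw [haconst i', ← haconst (x (q*k)), haxstar]
  have hPT1 : ∀ i' : ZMod n, P T i' ≤ 1 := by
    intro i'
    have h1 := hazero i'
    have h2 : ∀ j ∈ Finset.range k, (0:ℤ) ≤ auxChi n (P (T + j)) i' :=
      fun j _ => auxChi_nonneg _ _
    have h3 := (Finset.sum_eq_zero_iff_of_nonneg h2).mp h1 0 (Finset.mem_range.mpr (by omega))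
    rw [Nat.add_zero] at h3
    rcases hchi_cases T i' with h4 | ⟨h4, h5⟩
    · unfold auxChi at h4
      by_contra hcon
      rw [if_pos (by omega : 2 ≤ P T i')] at h4
      omega
    · omega
  have hVT : ∀ m : ZMod n, Vs T (m + 1) - Vs T m = 0 := by
    have hnn : ∀ m ∈ Finset.univ, (0:ℤ) ≤ Vs T (m+1) - Vs T m := by
      intro m _
      have h1 := hwalk T m
      have h2 := hPT1 m
      omega
    have hsum : ∑ m : ZMod n, (Vs T (m + 1) - Vs T m) = 0 := by
      rw [Finset.sum_sub_distrib, sum_shift (fun m => Vs T m) 1]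
      ring
    intro m
    exact (Finset.sum_eq_zero_iff_of_nonneg hnn).mp hsum m (Finset.mem_univ m)
  have hVTc : ∀ m : ZMod n, Vs T m = Vs T 0 :=
    zmodCircle (Vs T) (fun m => by have := hVT m; omega)
  obtain ⟨m1, hm1⟩ := hμex T
  obtain ⟨m2, hm2⟩ := hνex T
  have hμT := hμc T
  have hνT := hνc T
  have e1 := hVTc m1
  have e2 := hVTc m2
  omega
end
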